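/- arXiv:0708.2271 — 5 statements merged into one kernel-verified Lean document; each statement's English description precedes it below -/
import Mathlib

section
/- Let $g_0$ be a nonvanishing $C^2$ solution of $-g_0'' + q g_0 = 0$ on an interval $I$ containing $0$. Define recursively $\widetilde{X}^{(0)} \equiv 1$ and $\widetilde{X}^{(n)}(x) = n \int_0^x \widetilde{X}^{(n-1)}(\xi) g_0^2(\xi) d\xi$ for odd $n$, $\widetilde{X}^{(n)}(x) = n \int_0^x \widetilde{X}^{(n-1)}(\xi) g_0^{-2}(\xi) d\xi$ for even $n$. Then for every even $n \geq 2$, the function $g_0 \widetilde{X}^{(n)}$ satisfies $(\partial_x^2 - q)(g_0 \widetilde{X}^{(n)}) = n(n-1) g_0 \widetilde{X}^{(n-2)}$. -/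
open scoped Nat

/-- The SPPS recursive integrals: `spps wodd weven 0 ≡ 1` and
`spps wodd weven n x = n ∫₀ˣ spps wodd weven (n-1) · w`, where the weight `w`
is `wodd` when `n` is odd and `weven` when `n` is even. -/
noncomputable def spps (wodd weven : ℝ → ℂ) : ℕ → ℝ → ℂ
  | 0 => fun _ => 1
  | n + 1 => fun x => (n + 1 : ℂ) *
      ∫ t in (0:ℝ)..x,
        spps wodd weven n t * (if (n + 1) % 2 = 1 then wodd t else weven t)

/-- For even `n ≥ 2`, `(∂ₓ² - q)(g₀ X̃⁽ⁿ⁾) = n(n-1) g₀ X̃⁽ⁿ⁻²⁾`, where `X̃⁽ⁿ⁾`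
are the recursive integrals with weight `g₀²` for odd `n` and `g₀⁻²` for even `n`. -/
theorem spps_even_step (a b : ℝ) (ha : a < 0) (hb : 0 < b)
    (q g0 : ℝ → ℂ)
    (hq : ContinuousOn q (Set.Ioo a b))
    (hg : ContDiffOn ℝ 2 g0 (Set.Ioo a b))
    (hg0 : ∀ x ∈ Set.Ioo a b, g0 x ≠ 0)
    (heq : ∀ x ∈ Set.Ioo a b, deriv (deriv g0) x = q x * g0 x) :
    ∀ n : ℕ, 2 ≤ n → n % 2 = 0 → ∀ x ∈ Set.Ioo a b,
      deriv (deriv (fun y =>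
          g0 y * spps (fun t => g0 t ^ 2) (fun t => (g0 t ^ 2)⁻¹) n y)) x -
        q x * (g0 x * spps (fun t => g0 t ^ 2) (fun t => (g0 t ^ 2)⁻¹) n x) =
      (n : ℂ) * ((n : ℂ) - 1) * g0 x *
        spps (fun t => g0 t ^ 2) (fun t => (g0 t ^ 2)⁻¹) (n - 2) x := by
  set s := Set.Ioo a b with hs_def
  have hsopen : IsOpen s := isOpen_Ioo
  have h0s : (0:ℝ) ∈ s := ⟨ha, hb⟩
  set wo : ℝ → ℂ := fun t => g0 t ^ 2 with hwo
  set we : ℝ → ℂ := fun t => (g0 t ^ 2)⁻¹ with hwe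
  set X : ℕ → ℝ → ℂ := spps wo we with hX
  have hg0cont : ContinuousOn g0 s := hg.continuousOn
  have hwocont : ContinuousOn wo s := hg0cont.pow 2
  have hwecont : ContinuousOn we s :=
    (hg0cont.pow 2).inv₀ (fun y hy => pow_ne_zero 2 (hg0 y hy))
  -- FTC helper
  have key : ∀ f : ℝ → ℂ, ContinuousOn f s → ∀ y ∈ s,
      HasDerivAt (fun u => ∫ t in (0:ℝ)..u, f t) (f y) y := by
    intro f hf y hy
    have hsub : Set.uIcc (0:ℝ) y ⊆ s := Set.ordConnected_Ioo.uIcc_subset h0s hy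
    exact intervalIntegral.integral_hasDerivAt_right
      ((hf.mono hsub).intervalIntegrable)
      (hf.stronglyMeasurableAtFilter hsopen y hy)
      (hf.continuousAt (hsopen.mem_nhds hy))
  -- continuity and derivative of the X's
  have hcont : ∀ k, ContinuousOn (X k) s := by
    intro k
    induction k with
    | zero => exact continuousOn_const
    | succ k ih =>
      have hfk : ContinuousOn
          (fun t => X k t * (if (k+1) % 2 = 1 then wo t else we t)) s := by
        by_cases h : (k+1) % 2 = 1 <;> simp only [h, if_true, if_false] <;>
          [exact ih.mul hwocont; exact ih.mul hwecont]
      have hint : ContinuousOn (fun u => ∫ t in (0:ℝ)..u,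
          X k t * (if (k+1) % 2 = 1 then wo t else we t)) s :=
        fun y hy => ((key _ hfk y hy).continuousAt).continuousWithinAt
      exact continuousOn_const.mul hint
  have hderiv : ∀ k, ∀ y ∈ s,
      HasDerivAt (X (k+1))
        (((k:ℂ)+1) * (X k y * (if (k+1) % 2 = 1 then wo y else we y))) y := by
    intro k y hy
    have hfk : ContinuousOn
        (fun t => X k t * (if (k+1) % 2 = 1 then wo t else we t)) s := by
      by_cases h : (k+1) % 2 = 1 <;> simp only [h, if_true, if_false] <;>
        [exact (hcont k).mul hwocont; exact (hcont k).mul hwecont]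
    have h1 := (key _ hfk y hy).const_mul ((k:ℂ)+1)
    exact h1
  intro n hn2 hnpar x hx
  obtain ⟨m, rfl⟩ : ∃ m, n = m + 2 := ⟨n - 2, by omega⟩
  have hm : m % 2 = 0 := by omega
  have e1 : (m+1) % 2 = 1 := by omega
  have e2 : ¬ (m+1+1) % 2 = 1 := by omega
  -- specialized derivatives
  have hXn' : ∀ y ∈ s, HasDerivAt (X (m+2))
      (((m:ℂ)+2) * (X (m+1) y * we y)) y := by
    intro y hy
    have := hderiv (m+1) y hy
    rw [if_neg e2] at this
    convert this using 2 <;> push_cast <;> ring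
  have hXn1' : ∀ y ∈ s, HasDerivAt (X (m+1))
      (((m:ℂ)+1) * (X m y * wo y)) y := by
    intro y hy
    have := hderiv m y hy
    simpa only [e1, if_true] using this
  -- g0 derivatives
  have hg0diff : ∀ y ∈ s, HasDerivAt g0 (deriv g0 y) y := by
    intro y hy
    exact ((hg.differentiableOn (by norm_num)).differentiableAt
      (hsopen.mem_nhds hy)).hasDerivAt
  have hg1 : ContDiffOn ℝ 1 (deriv g0) s :=
    hg.deriv_of_isOpen hsopen (by norm_num)
  have hg1diff : ∀ y ∈ s, HasDerivAt (deriv g0) (deriv (deriv g0) y) y := by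
    intro y hy
    exact ((hg1.differentiableOn (by norm_num)).differentiableAt
      (hsopen.mem_nhds hy)).hasDerivAt
  -- first derivative of u = g0 * X (m+2)
  set u : ℝ → ℂ := fun y => g0 y * X (m+2) y with hu
  have hu' : ∀ y ∈ s, HasDerivAt u
      (deriv g0 y * X (m+2) y + g0 y * (((m:ℂ)+2) * (X (m+1) y * we y))) y := by
    intro y hy
    exact (hg0diff y hy).mul (hXn' y hy)
  set F : ℝ → ℂ := fun y =>
    deriv g0 y * X (m+2) y + g0 y * (((m:ℂ)+2) * (X (m+1) y * we y)) with hF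
  have hEq : deriv u =ᶠ[nhds x] F := by
    filter_upwards [hsopen.mem_nhds hx] with y hy using (hu' y hy).deriv
  -- second derivative
  have hg0x : g0 x ≠ 0 := hg0 x hx
  have hg0x2 : g0 x ^ 2 ≠ 0 := pow_ne_zero 2 hg0x
  have hwe' : HasDerivAt we (-(2 * g0 x * deriv g0 x) / (g0 x ^ 2) ^ 2) x := by
    have hsq : HasDerivAt (fun y => g0 y ^ 2)
        (deriv g0 x * g0 x + g0 x * deriv g0 x) x := by
      have h := (hg0diff x hx).mul (hg0diff x hx)
      have e : (fun y => g0 y ^ 2) = fun y => g0 y * g0 y := by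
        funext y; ring
      rw [e]; exact h
    have hi : HasDerivAt (Inv.inv : ℂ → ℂ) (-((g0 x ^ 2) ^ 2)⁻¹) (g0 x ^ 2) :=
      hasDerivAt_inv hg0x2
    have h := hi.scomp x hsq
    have e2 : we = (Inv.inv : ℂ → ℂ) ∘ (fun y => g0 y ^ 2) := rfl
    rw [e2]
    refine h.congr_deriv ?_
    simp only [smul_eq_mul]
    field_simp
    ring
  have hF' : HasDerivAt F
      ((deriv (deriv g0) x * X (m+2) x + deriv g0 x * (((m:ℂ)+2) * (X (m+1) x * we x)))
        + (deriv g0 x * (((m:ℂ)+2) * (X (m+1) x * we x))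
          + g0 x * (((m:ℂ)+2) * ((((m:ℂ)+1) * (X m x * wo x)) * we x
            + X (m+1) x * (-(2 * g0 x * deriv g0 x) / (g0 x ^ 2) ^ 2))))) x := by
    exact ((hg1diff x hx).mul (hXn' x hx)).add
      ((hg0diff x hx).mul ((((hXn1' x hx).mul hwe').const_mul ((m:ℂ)+2))))
  have hdd : deriv (deriv u) x =
      (deriv (deriv g0) x * X (m+2) x + deriv g0 x * (((m:ℂ)+2) * (X (m+1) x * we x)))
        + (deriv g0 x * (((m:ℂ)+2) * (X (m+1) x * we x))
          + g0 x * (((m:ℂ)+2) * ((((m:ℂ)+1) * (X m x * wo x)) * we x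
            + X (m+1) x * (-(2 * g0 x * deriv g0 x) / (g0 x ^ 2) ^ 2)))) := by
    rw [hEq.deriv_eq]
    exact hF'.deriv
  show deriv (deriv u) x - q x * u x = _
  rw [hdd, heq x hx, hu]
  have hm2 : m + 2 - 2 = m := by omega
  rw [hm2]
  simp only [hwo, hwe]
  push_cast
  have h1 : g0 x ^ 2 * (g0 x ^ 2)⁻¹ = 1 := mul_inv_cancel₀ hg0x2
  have h2 : -(2 * g0 x * deriv g0 x) / (g0 x ^ 2) ^ 2 =
      -(2 * deriv g0 x) * (g0 x)⁻¹ * (g0 x ^ 2)⁻¹ := by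
    field_simp
  rw [h2]
  have h3 : g0 x * (g0 x)⁻¹ = 1 := mul_inv_cancel₀ hg0x
  linear_combination (((m:ℂ)+2) * ((m:ℂ)+1) * g0 x * X m x) * h1 -
    2 * ((m:ℂ)+2) * deriv g0 x * X (m+1) x * (g0 x ^ 2)⁻¹ * h3
end

section
/- With $g_0$ a bounded nonvanishing $C^2$ solution of $-g_0'' + q g_0 = 0$ on a bounded interval $I$ containing $0$, with $1/g_0$ bounded, and $\widetilde{X}^{(n)}$ the recursive integrals ($\widetilde{X}^{(0)}\equiv 1$, odd step weight $g_0^2$, even step weight $g_0^{-2}$), the series $u_1(x) = g_0(x) \sum_{\text{even } n \geq 0} \frac{\omega^n}{n!} \widetilde{X}^{(n)}(x)$ converges uniformly on $I$ and defines a solution of the equation $-u_1'' + q u_1 + \omega^2 u_1 = 0$ on $I$, for any $\omega \in \mathbb{C}$. -/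
open scoped Nat

lemma abs_integral_abs_pow (n : ℕ) (x : ℝ) :
    |∫ t in (0:ℝ)..x, |t| ^ n| = |x| ^ (n + 1) / (n + 1) := by
  rcases le_total 0 x with hx | hx
  · have h1 : (∫ t in (0:ℝ)..x, |t| ^ n) = ∫ t in (0:ℝ)..x, t ^ n := by
      apply intervalIntegral.integral_congr
      intro t ht
      rw [Set.uIcc_of_le hx] at ht
      show |t| ^ n = t ^ n
      rw [abs_of_nonneg ht.1]
    rw [h1, integral_pow]
    rw [abs_of_nonneg hx, zero_pow (Nat.succ_ne_zero n), sub_zero, abs_div,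
      abs_of_nonneg (pow_nonneg hx _), abs_of_nonneg (by positivity : (0:ℝ) ≤ (n:ℝ)+1)]
  · have h1 : (∫ t in (0:ℝ)..x, |t| ^ n) = ∫ t in (0:ℝ)..x, (-t) ^ n := by
      apply intervalIntegral.integral_congr
      intro t ht
      rw [Set.uIcc_of_ge hx] at ht
      show |t| ^ n = (-t) ^ n
      rw [abs_of_nonpos ht.2]
    have h2 : (∫ t in (0:ℝ)..x, (-t) ^ n) = ∫ s in (-x)..(0:ℝ), s ^ n := by
      have := intervalIntegral.integral_comp_neg (a := (0:ℝ)) (b := x) (fun s => s ^ n)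
      simpa using this
    rw [h1, h2, integral_pow]
    rw [abs_of_nonpos hx, zero_pow (Nat.succ_ne_zero n), zero_sub, abs_div, abs_neg,
      abs_of_nonneg (pow_nonneg (by linarith) _), abs_of_nonneg (by positivity : (0:ℝ) ≤ (n:ℝ)+1)]

lemma summable_helper (c r : ℝ) (j : ℕ) (hc : 0 ≤ c) (hr : 0 ≤ r) :
    Summable (fun k : ℕ => c * (r ^ (2 * k + j) / ((2 * k + j)! : ℝ))) := by
  have h1 : Summable (fun k : ℕ => c * r ^ j * ((r ^ 2) ^ k / (k ! : ℝ))) :=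
    (Real.summable_pow_div_factorial (r ^ 2)).mul_left _
  refine Summable.of_nonneg_of_le (fun k => by positivity) (fun k => ?_) h1
  have hfle : (k ! : ℝ) ≤ ((2 * k + j)! : ℝ) := by
    exact_mod_cast Nat.factorial_le (by omega)
  have h2 : r ^ (2 * k + j) = r ^ j * (r ^ 2) ^ k := by
    rw [← pow_mul, ← pow_add]; ring_nf
  rw [h2]
  calc c * (r ^ j * (r ^ 2) ^ k / ((2 * k + j)! : ℝ))
      = (c * r ^ j * (r ^ 2) ^ k) / ((2 * k + j)! : ℝ) := by ring
    _ ≤ (c * r ^ j * (r ^ 2) ^ k) / (k ! : ℝ) := by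
        apply div_le_div_of_nonneg_left ?_ ?_ hfle
        · positivity
        · exact_mod_cast k.factorial_pos
    _ = c * r ^ j * ((r ^ 2) ^ k / (k ! : ℝ)) := by ring

/-- shift a sequence of functions, putting `0` in front -/
noncomputable def sppsShift (f : ℕ → ℝ → ℂ) : ℕ → ℝ → ℂ
  | 0 => fun _ => 0
  | m + 1 => f m

/-- The SPPS series `u₁ = g₀ ∑_{even n} ωⁿ/n! X̃⁽ⁿ⁾` converges uniformly on the
interval and solves `-u₁'' + q u₁ + ω² u₁ = 0`. -/
theorem spps_u1_solution (a b : ℝ) (ha : a < 0) (hb : 0 < b) (ω : ℂ)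
    (q g0 : ℝ → ℂ)
    (hq : ContinuousOn q (Set.Ioo a b))
    (hg : ContDiffOn ℝ 2 g0 (Set.Ioo a b))
    (hg0 : ∀ x ∈ Set.Ioo a b, g0 x ≠ 0)
    (heq : ∀ x ∈ Set.Ioo a b, deriv (deriv g0) x = q x * g0 x)
    (hbd : ∃ M : ℝ, ∀ x ∈ Set.Ioo a b, ‖g0 x‖ ≤ M ∧ ‖(g0 x)⁻¹‖ ≤ M) :
    TendstoUniformlyOn
      (fun N x => g0 x * ∑ k ∈ Finset.range N,
        ω ^ (2 * k) / ((2 * k)! : ℂ) *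
          spps (fun t => g0 t ^ 2) (fun t => (g0 t ^ 2)⁻¹) (2 * k) x)
      (fun x => g0 x * ∑' k : ℕ,
        ω ^ (2 * k) / ((2 * k)! : ℂ) *
          spps (fun t => g0 t ^ 2) (fun t => (g0 t ^ 2)⁻¹) (2 * k) x)
      Filter.atTop (Set.Ioo a b) ∧
    ∀ x ∈ Set.Ioo a b,
      -(deriv (deriv (fun y => g0 y * ∑' k : ℕ,
          ω ^ (2 * k) / ((2 * k)! : ℂ) *
            spps (fun t => g0 t ^ 2) (fun t => (g0 t ^ 2)⁻¹) (2 * k) y)) x) +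
        q x * (g0 x * ∑' k : ℕ,
          ω ^ (2 * k) / ((2 * k)! : ℂ) *
            spps (fun t => g0 t ^ 2) (fun t => (g0 t ^ 2)⁻¹) (2 * k) x) +
        ω ^ 2 * (g0 x * ∑' k : ℕ,
          ω ^ (2 * k) / ((2 * k)! : ℂ) *
            spps (fun t => g0 t ^ 2) (fun t => (g0 t ^ 2)⁻¹) (2 * k) x) = 0 := by
  classical
  set I : Set ℝ := Set.Ioo a b with hIdef
  have hI : IsOpen I := isOpen_Ioo
  have h0 : (0:ℝ) ∈ I := ⟨ha, hb⟩
  set w1 : ℝ → ℂ := fun t => g0 t ^ 2 with hw1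
  set w2 : ℝ → ℂ := fun t => (g0 t ^ 2)⁻¹ with hw2
  set X : ℕ → ℝ → ℂ := spps w1 w2 with hX
  obtain ⟨M0, hM0⟩ := hbd
  set C : ℝ := (max M0 1) ^ 2 with hC
  have hC1 : (1:ℝ) ≤ C := by
    have : (1:ℝ) ≤ max M0 1 := le_max_right _ _
    nlinarith
  have hC0 : (0:ℝ) ≤ C := by positivity
  have hM0le : M0 ≤ max M0 1 := le_max_left _ _
  -- bounds on the weights
  have hw1b : ∀ x ∈ I, ‖w1 x‖ ≤ C := by
    intro x hx
    rw [hw1]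
    show ‖g0 x ^ 2‖ ≤ C
    rw [norm_pow, hC]
    have h1 := (hM0 x hx).1
    have := norm_nonneg (g0 x)
    nlinarith
  have hw2b : ∀ x ∈ I, ‖w2 x‖ ≤ C := by
    intro x hx
    rw [hw2]
    show ‖(g0 x ^ 2)⁻¹‖ ≤ C
    rw [norm_inv, norm_pow, hC, ← inv_pow]
    have h1 := (hM0 x hx).2
    rw [← norm_inv] at *
    have := norm_nonneg ((g0 x)⁻¹)
    nlinarith
  have hcg0 : ContinuousOn g0 I := hg.continuousOn
  have hw1c : ContinuousOn w1 I := by rw [hw1]; exact hcg0.pow 2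
  have hw2c : ContinuousOn w2 I := by
    rw [hw2]
    exact (hcg0.pow 2).inv₀ fun x hx => pow_ne_zero 2 (hg0 x hx)
  have hwc : ∀ n : ℕ, ContinuousOn (fun t => if (n+1) % 2 = 1 then w1 t else w2 t) I := by
    intro n
    by_cases h : (n+1) % 2 = 1
    · simp only [if_pos h]; exact hw1c
    · simp only [if_neg h]; exact hw2c
  have hwb : ∀ (n : ℕ), ∀ t ∈ I, ‖if (n+1) % 2 = 1 then w1 t else w2 t‖ ≤ C := by
    intro n t ht
    split_ifs
    · exact hw1b t ht
    · exact hw2b t ht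
  have hsubI : ∀ x ∈ I, Set.uIcc (0:ℝ) x ⊆ I :=
    fun x hx => Set.ordConnected_Ioo.uIcc_subset h0 hx
  -- FTC helper
  have hFTC : ∀ h : ℝ → ℂ, ContinuousOn h I → ∀ x ∈ I,
      HasDerivAt (fun u => ∫ t in (0:ℝ)..u, h t) (h x) x := by
    intro h hc x hx
    apply intervalIntegral.integral_hasDerivAt_right
    · exact (hc.mono (hsubI x hx)).intervalIntegrable
    · exact hc.stronglyMeasurableAtFilter hI x hx
    · exact (hc x hx).continuousAt (hI.mem_nhds hx)
  have hXsucc : ∀ (n : ℕ) (x : ℝ), X (n+1) x =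
      ((n:ℂ)+1) * ∫ t in (0:ℝ)..x, X n t * (if (n+1) % 2 = 1 then w1 t else w2 t) := by
    intro n x; rw [hX]; rfl
  -- continuity of the iterated integrals
  have hXcont : ∀ n : ℕ, ContinuousOn (X n) I := by
    intro n
    induction n with
    | zero =>
      have : X 0 = fun _ => (1:ℂ) := by rw [hX]; rfl
      rw [this]; exact continuousOn_const
    | succ n ih =>
      have hic : ContinuousOn (fun t => X n t * (if (n+1) % 2 = 1 then w1 t else w2 t)) I :=
        ih.mul (hwc n)
      have : ContinuousOn (fun x => ((n:ℂ)+1) *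
          ∫ t in (0:ℝ)..x, X n t * (if (n+1) % 2 = 1 then w1 t else w2 t)) I := by
        apply continuousOn_const.mul
        intro x hx
        exact ((hFTC _ hic x hx).differentiableAt.continuousAt).continuousWithinAt
      have he : X (n+1) = fun x => ((n:ℂ)+1) *
          ∫ t in (0:ℝ)..x, X n t * (if (n+1) % 2 = 1 then w1 t else w2 t) :=
        funext fun x => hXsucc n x
      rw [he]; exact this
  -- derivative of the iterated integrals
  have hXderiv : ∀ (n : ℕ), ∀ x ∈ I, HasDerivAt (X (n+1))
      (((n:ℂ)+1) * (X n x * (if (n+1) % 2 = 1 then w1 x else w2 x))) x := by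
    intro n x hx
    have hic : ContinuousOn (fun t => X n t * (if (n+1) % 2 = 1 then w1 t else w2 t)) I :=
      (hXcont n).mul (hwc n)
    have h := (hFTC _ hic x hx).const_mul ((n:ℂ)+1)
    have he : X (n+1) = fun u => ((n:ℂ)+1) *
        ∫ t in (0:ℝ)..u, X n t * (if (n+1) % 2 = 1 then w1 t else w2 t) :=
      funext fun u => hXsucc n u
    rw [he]
    exact h
  -- pointwise bound
  have hXbound : ∀ n : ℕ, ∀ x ∈ I, ‖X n x‖ ≤ (C * |x|) ^ n := by
    intro n
    induction n with
    | zero =>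
      intro x hx
      have : X 0 x = 1 := by rw [hX]; rfl
      rw [this]; simp
    | succ n ih =>
      intro x hx
      rw [hXsucc n x, norm_mul]
      have key : ‖∫ t in (0:ℝ)..x, X n t * (if (n+1) % 2 = 1 then w1 t else w2 t)‖
          ≤ |∫ t in (0:ℝ)..x, C ^ (n+1) * |t| ^ n| := by
        apply intervalIntegral.norm_integral_le_abs_of_norm_le
        · filter_upwards [MeasureTheory.ae_restrict_mem measurableSet_uIoc] with t ht
          have htI : t ∈ I := hsubI x hx (Set.Ioc_subset_Icc_self ht)
          rw [norm_mul]
          calc ‖X n t‖ * ‖if (n+1) % 2 = 1 then w1 t else w2 t‖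
              ≤ (C * |t|) ^ n * C := by
                apply mul_le_mul (ih t htI) (hwb n t htI) (norm_nonneg _)
                positivity
            _ = C ^ (n+1) * |t| ^ n := by rw [mul_pow]; ring
        · exact (continuous_const.mul (continuous_abs.pow n)).intervalIntegrable _ _
      rw [intervalIntegral.integral_const_mul, abs_mul,
        abs_of_nonneg (pow_nonneg hC0 _), abs_integral_abs_pow] at key
      have hnorm : ‖((n:ℂ)+1)‖ = (n:ℝ)+1 := by
        have : ((n:ℂ)+1) = ((n+1 : ℕ) : ℂ) := by push_cast; ring
        rw [this, Complex.norm_natCast]; push_cast; ring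
      rw [hnorm]
      have hn1 : (0:ℝ) < (n:ℝ)+1 := by positivity
      calc ((n:ℝ)+1) * ‖∫ t in (0:ℝ)..x, X n t * (if (n+1) % 2 = 1 then w1 t else w2 t)‖
          ≤ ((n:ℝ)+1) * (C ^ (n+1) * (|x| ^ (n+1) / ((n:ℝ)+1))) := by
            apply mul_le_mul_of_nonneg_left key (le_of_lt hn1)
        _ = (C * |x|) ^ (n+1) := by rw [mul_pow]; field_simp
  -- uniform bounds independent of x
  set L : ℝ := max b (-a) with hLdef
  have hL0 : (0:ℝ) ≤ L := le_trans hb.le (le_max_left _ _)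
  have habs : ∀ x ∈ I, |x| ≤ L := by
    intro x hx
    rw [abs_le]
    constructor
    · have : -L ≤ a := by rw [hLdef]; have := le_max_right b (-a); linarith
      linarith [hx.1]
    · have : b ≤ L := le_max_left _ _
      linarith [hx.2]
  set D : ℝ := C * L with hDdef
  have hD0 : (0:ℝ) ≤ D := by positivity
  have hXb : ∀ n : ℕ, ∀ x ∈ I, ‖X n x‖ ≤ D ^ n := by
    intro n x hx
    refine (hXbound n x hx).trans ?_
    apply pow_le_pow_left₀ (by positivity)
    rw [hDdef]
    exact mul_le_mul_of_nonneg_left (habs x hx) hC0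
  set r : ℝ := ‖ω‖ * D with hrdef
  have hr0 : (0:ℝ) ≤ r := by positivity
  have hkey : ∀ (A B c u : ℂ), B ≠ 0 → c ≠ 0 → A / (c * B) * (c * u) = A / B * u := by
    intro A B c u hB hc
    field_simp
  -- summable majorants
  have hurS : Summable (fun k : ℕ => r ^ (2*k) / ((2*k)! : ℝ)) := by
    have h := summable_helper 1 r 0 zero_le_one hr0
    exact h.congr fun k => by norm_num
  have hurS' : Summable (fun k : ℕ => ‖ω‖ * C * (r ^ (2*k-1) / ((2*k-1)! : ℝ))) := by
    rw [← summable_nat_add_iff 1]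
    have h := summable_helper (‖ω‖ * C) r 1 (by positivity) hr0
    exact h.congr fun k => by rw [show 2*(k+1)-1 = 2*k+1 from by omega]
  have hurT : Summable (fun k : ℕ => ‖ω‖ * (r ^ (2*k+1) / ((2*k+1)! : ℝ))) :=
    summable_helper ‖ω‖ r 1 (norm_nonneg _) hr0
  have hurT' : Summable (fun k : ℕ => ‖ω‖^2 * C * (r ^ (2*k) / ((2*k)! : ℝ))) := by
    have h := summable_helper (‖ω‖^2 * C) r 0 (by positivity) hr0
    exact h.congr fun k => by norm_num
  -- bounds on the terms of the series
  have hfSb : ∀ (k : ℕ), ∀ x ∈ I,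
      ‖ω ^ (2*k) / ((2*k)! : ℂ) * X (2*k) x‖ ≤ r ^ (2*k) / ((2*k)! : ℝ) := by
    intro k x hx
    rw [norm_mul, norm_div, norm_pow, Complex.norm_natCast]
    have h1 : ‖X (2*k) x‖ ≤ D ^ (2*k) := hXb (2*k) x hx
    calc ‖ω‖ ^ (2*k) / ((2*k)! : ℝ) * ‖X (2*k) x‖
        ≤ ‖ω‖ ^ (2*k) / ((2*k)! : ℝ) * D ^ (2*k) := by
          apply mul_le_mul_of_nonneg_left h1 (by positivity)
      _ = r ^ (2*k) / ((2*k)! : ℝ) := by rw [hrdef, mul_pow]; ring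
  have hfTb : ∀ (k : ℕ), ∀ x ∈ I,
      ‖ω ^ (2*k+2) / ((2*k+1)! : ℂ) * X (2*k+1) x‖ ≤ ‖ω‖ * (r ^ (2*k+1) / ((2*k+1)! : ℝ)) := by
    intro k x hx
    rw [norm_mul, norm_div, norm_pow, Complex.norm_natCast]
    have h1 : ‖X (2*k+1) x‖ ≤ D ^ (2*k+1) := hXb (2*k+1) x hx
    calc ‖ω‖ ^ (2*k+2) / ((2*k+1)! : ℝ) * ‖X (2*k+1) x‖
        ≤ ‖ω‖ ^ (2*k+2) / ((2*k+1)! : ℝ) * D ^ (2*k+1) := by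
          apply mul_le_mul_of_nonneg_left h1 (by positivity)
      _ = ‖ω‖ * (r ^ (2*k+1) / ((2*k+1)! : ℝ)) := by rw [hrdef, mul_pow]; ring
  have hfSsum : ∀ x ∈ I, Summable (fun k : ℕ => ω ^ (2*k) / ((2*k)! : ℂ) * X (2*k) x) :=
    fun x hx => Summable.of_norm_bounded hurS (fun k => hfSb k x hx)
  have hfTsum : ∀ x ∈ I, Summable (fun k : ℕ => ω ^ (2*k+2) / ((2*k+1)! : ℂ) * X (2*k+1) x) :=
    fun x hx => Summable.of_norm_bounded hurT (fun k => hfTb k x hx)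
  -- derivatives of individual terms of the S-series
  have hfS'd : ∀ (k : ℕ), ∀ y ∈ I, HasDerivAt (fun z => ω ^ (2*k) / ((2*k)! : ℂ) * X (2*k) z)
      (sppsShift (fun m z => (ω ^ (2*m+2) / ((2*m+1)! : ℂ) * X (2*m+1) z) * w2 z) k y) y := by
    intro k y hy
    cases k with
    | zero =>
      show HasDerivAt _ (0 : ℂ) y
      have he : (fun z : ℝ => ω ^ (2*0) / ((2*0)! : ℂ) * X (2*0) z)
          = fun _ : ℝ => ω ^ (2*0) / ((2*0)! : ℂ) := by
        funext z
        rw [show X (2*0) z = 1 from by rw [hX]; rfl, mul_one]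
      rw [he]
      exact hasDerivAt_const y _
    | succ m =>
      show HasDerivAt _ ((ω ^ (2*m+2) / ((2*m+1)! : ℂ) * X (2*m+1) y) * w2 y) y
      have h := (hXderiv (2*m+1) y hy).const_mul (ω ^ (2*(m+1)) / ((2*(m+1))! : ℂ))
      rw [if_neg (by omega : ¬ (2*m+1+1) % 2 = 1)] at h
      have he : (fun z : ℝ => ω ^ (2*(m+1)) / ((2*(m+1))! : ℂ) * X (2*m+1+1) z)
          = fun z : ℝ => ω ^ (2*(m+1)) / ((2*(m+1))! : ℂ) * X (2*(m+1)) z := by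
        rw [show 2*m+1+1 = 2*(m+1) from by ring]
      rw [he] at h
      refine h.congr_deriv ?_
      · have hfac : ((2*(m+1))! : ℂ) = (((2*m+1 : ℕ) : ℂ) + 1) * ((2*m+1)! : ℂ) := by
          rw [show 2*(m+1) = (2*m+1)+1 from by ring, Nat.factorial_succ]
          push_cast; ring
        have hfne : ((2*m+1)! : ℂ) ≠ 0 := by
          exact_mod_cast (Nat.factorial_pos (2*m+1)).ne'
        have hnne : ((2*m+1 : ℕ) : ℂ) + 1 ≠ 0 := by
          have h2 : ((2*m+1 : ℕ) : ℂ) + 1 = ((2*m+2 : ℕ) : ℂ) := by push_cast; ring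
          rw [h2]
          exact Nat.cast_ne_zero.mpr (by omega)
        rw [hfac, show 2*(m+1) = 2*m+2 from by ring]
        calc ω ^ (2*m+2) / ((((2*m+1 : ℕ) : ℂ) + 1) * ((2*m+1)! : ℂ))
            * ((((2*m+1 : ℕ) : ℂ) + 1) * (X (2*m+1) y * w2 y))
            = ω ^ (2*m+2) / ((2*m+1)! : ℂ) * (X (2*m+1) y * w2 y) :=
              hkey _ _ _ _ hfne hnne
          _ = ω ^ (2*m+2) / ((2*m+1)! : ℂ) * X (2*m+1) y * w2 y := by ring
  have hfS'b : ∀ (k : ℕ), ∀ y ∈ I,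
      ‖sppsShift (fun m z => (ω ^ (2*m+2) / ((2*m+1)! : ℂ) * X (2*m+1) z) * w2 z) k y‖
        ≤ ‖ω‖ * C * (r ^ (2*k-1) / ((2*k-1)! : ℝ)) := by
    intro k y hy
    cases k with
    | zero =>
      show ‖(0:ℂ)‖ ≤ _
      rw [norm_zero]
      positivity
    | succ m =>
      show ‖(ω ^ (2*m+2) / ((2*m+1)! : ℂ) * X (2*m+1) y) * w2 y‖ ≤ _
      rw [show 2*(m+1)-1 = 2*m+1 from by omega]
      rw [norm_mul]
      calc ‖ω ^ (2*m+2) / ((2*m+1)! : ℂ) * X (2*m+1) y‖ * ‖w2 y‖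
          ≤ (‖ω‖ * (r ^ (2*m+1) / ((2*m+1)! : ℝ))) * C := by
            apply mul_le_mul (hfTb m y hy) (hw2b y hy) (norm_nonneg _) (by positivity)
        _ = ‖ω‖ * C * (r ^ (2*m+1) / ((2*m+1)! : ℝ)) := by ring
  -- derivative of the S-series
  have hSd : ∀ x ∈ I, HasDerivAt (fun z => ∑' k : ℕ, ω ^ (2*k) / ((2*k)! : ℂ) * X (2*k) z)
      ((∑' k : ℕ, ω ^ (2*k+2) / ((2*k+1)! : ℂ) * X (2*k+1) x) * w2 x) x := by
    intro x hx
    have H := hasDerivAt_tsum_of_isPreconnected hurS' hI isPreconnected_Ioo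
      hfS'd hfS'b h0 (hfSsum 0 h0) hx
    refine H.congr_deriv ?_
    have hsum' : Summable (fun k : ℕ =>
        sppsShift (fun m z => (ω ^ (2*m+2) / ((2*m+1)! : ℂ) * X (2*m+1) z) * w2 z) k x) :=
      Summable.of_norm_bounded hurS' (fun k => hfS'b k x hx)
    rw [Summable.tsum_eq_zero_add hsum']
    have h1 : sppsShift (fun m z => (ω ^ (2*m+2) / ((2*m+1)! : ℂ) * X (2*m+1) z) * w2 z) 0 x
        = 0 := rfl
    rw [h1, zero_add, ← tsum_mul_right]
    exact tsum_congr fun k => rfl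
  -- derivatives of individual terms of the T-series
  have hfT'd : ∀ (k : ℕ), ∀ y ∈ I, HasDerivAt (fun z => ω ^ (2*k+2) / ((2*k+1)! : ℂ) * X (2*k+1) z)
      ((ω^2 * (ω ^ (2*k) / ((2*k)! : ℂ) * X (2*k) y)) * w1 y) y := by
    intro k y hy
    have h := (hXderiv (2*k) y hy).const_mul (ω ^ (2*k+2) / ((2*k+1)! : ℂ))
    rw [if_pos (by omega : (2*k+1) % 2 = 1)] at h
    refine h.congr_deriv ?_
    have hfac : ((2*k+1)! : ℂ) = (((2*k : ℕ) : ℂ) + 1) * ((2*k)! : ℂ) := by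
      rw [Nat.factorial_succ]
      push_cast; ring
    have hfne : ((2*k)! : ℂ) ≠ 0 := by
      exact_mod_cast (Nat.factorial_pos (2*k)).ne'
    have hnne : ((2*k : ℕ) : ℂ) + 1 ≠ 0 := by
      have h2 : ((2*k : ℕ) : ℂ) + 1 = ((2*k+1 : ℕ) : ℂ) := by push_cast; ring
      rw [h2]
      exact Nat.cast_ne_zero.mpr (by omega)
    rw [hfac]
    calc ω ^ (2*k+2) / ((((2*k : ℕ) : ℂ) + 1) * ((2*k)! : ℂ))
        * ((((2*k : ℕ) : ℂ) + 1) * (X (2*k) y * w1 y))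
        = ω ^ (2*k+2) / ((2*k)! : ℂ) * (X (2*k) y * w1 y) :=
          hkey _ _ _ _ hfne hnne
      _ = (ω^2 * (ω ^ (2*k) / ((2*k)! : ℂ) * X (2*k) y)) * w1 y := by ring
  have hfT'b : ∀ (k : ℕ), ∀ y ∈ I,
      ‖(ω^2 * (ω ^ (2*k) / ((2*k)! : ℂ) * X (2*k) y)) * w1 y‖
        ≤ ‖ω‖^2 * C * (r ^ (2*k) / ((2*k)! : ℝ)) := by
    intro k y hy
    rw [norm_mul, norm_mul, norm_pow]
    calc ‖ω‖^2 * ‖ω ^ (2*k) / ((2*k)! : ℂ) * X (2*k) y‖ * ‖w1 y‖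
        ≤ ‖ω‖^2 * (r ^ (2*k) / ((2*k)! : ℝ)) * C := by
          apply mul_le_mul ?_ (hw1b y hy) (norm_nonneg _) (by positivity)
          exact mul_le_mul_of_nonneg_left (hfSb k y hy) (by positivity)
      _ = ‖ω‖^2 * C * (r ^ (2*k) / ((2*k)! : ℝ)) := by ring
  -- derivative of the T-series
  have hTd : ∀ x ∈ I, HasDerivAt (fun z => ∑' k : ℕ, ω ^ (2*k+2) / ((2*k+1)! : ℂ) * X (2*k+1) z)
      ((ω^2 * ∑' k : ℕ, ω ^ (2*k) / ((2*k)! : ℂ) * X (2*k) x) * w1 x) x := by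
    intro x hx
    have H := hasDerivAt_tsum_of_isPreconnected hurT' hI isPreconnected_Ioo
      hfT'd hfT'b h0 (hfTsum 0 h0) hx
    refine H.congr_deriv ?_
    rw [tsum_mul_right, tsum_mul_left]
  -- derivatives of g0
  have hg0Dat : ∀ y ∈ I, HasDerivAt g0 (deriv g0 y) y := by
    intro y hy
    have hd : DifferentiableOn ℝ g0 I := hg.differentiableOn (by norm_num)
    exact (hd.differentiableAt (hI.mem_nhds hy)).hasDerivAt
  have hdg0c1 : ContDiffOn ℝ 1 (deriv g0) I := hg.deriv_of_isOpen hI (by norm_num)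
  have hg0D2at : ∀ y ∈ I, HasDerivAt (deriv g0) (q y * g0 y) y := by
    intro y hy
    have hd : DifferentiableOn ℝ (deriv g0) I := hdg0c1.differentiableOn (by norm_num)
    have h := (hd.differentiableAt (hI.mem_nhds hy)).hasDerivAt
    rwa [heq y hy] at h
  -- derivative of u1
  have hu1d : ∀ y ∈ I, HasDerivAt
      (fun z => g0 z * ∑' k : ℕ, ω ^ (2*k) / ((2*k)! : ℂ) * X (2*k) z)
      (deriv g0 y * (∑' k : ℕ, ω ^ (2*k) / ((2*k)! : ℂ) * X (2*k) y)
        + (g0 y)⁻¹ * ∑' k : ℕ, ω ^ (2*k+2) / ((2*k+1)! : ℂ) * X (2*k+1) y) y := by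
    intro y hy
    have h := (hg0Dat y hy).mul (hSd y hy)
    refine h.congr_deriv ?_
    have hne : g0 y ≠ 0 := hg0 y hy
    simp only [hw2]
    field_simp
  -- second derivative computation
  have hvd : ∀ x ∈ I, HasDerivAt
      (fun y => deriv g0 y * (∑' k : ℕ, ω ^ (2*k) / ((2*k)! : ℂ) * X (2*k) y)
        + (g0 y)⁻¹ * ∑' k : ℕ, ω ^ (2*k+2) / ((2*k+1)! : ℂ) * X (2*k+1) y)
      (q x * (g0 x * ∑' k : ℕ, ω ^ (2*k) / ((2*k)! : ℂ) * X (2*k) x)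
        + ω^2 * (g0 x * ∑' k : ℕ, ω ^ (2*k) / ((2*k)! : ℂ) * X (2*k) x)) x := by
    intro x hx
    have h1 := (hg0D2at x hx).mul (hSd x hx)
    have h2' := (hasDerivAt_const x (1:ℂ)).fun_div (hg0Dat x hx) (hg0 x hx)
    simp only [one_div] at h2'
    have h2 := h2'.mul (hTd x hx)
    have h := h1.add h2
    refine h.congr_deriv ?_
    have hne : g0 x ≠ 0 := hg0 x hx
    simp only [hw1, hw2]
    field_simp
    ring
  constructor
  · -- uniform convergence
    have hfgb : ∀ (k : ℕ) (x : ℝ), x ∈ I →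
        ‖g0 x * (ω ^ (2*k) / ((2*k)! : ℂ) * X (2*k) x)‖
          ≤ (max M0 1) * (r ^ (2*k) / ((2*k)! : ℝ)) := by
      intro k x hx
      rw [norm_mul]
      apply mul_le_mul ((hM0 x hx).1.trans hM0le) (hfSb k x hx) (norm_nonneg _)
      positivity
    have huSg : Summable (fun k : ℕ => (max M0 1) * (r ^ (2*k) / ((2*k)! : ℝ))) := by
      have h := summable_helper (max M0 1) r 0 (by positivity) hr0
      exact h.congr fun k => by norm_num
    have h := tendstoUniformlyOn_tsum_nat huSg hfgb
    have e1 : (fun (N : ℕ) (x : ℝ) => g0 x * ∑ k ∈ Finset.range N,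
        ω ^ (2 * k) / ((2 * k)! : ℂ) * X (2 * k) x)
        = fun (N : ℕ) (x : ℝ) => ∑ k ∈ Finset.range N,
            g0 x * (ω ^ (2 * k) / ((2 * k)! : ℂ) * X (2 * k) x) := by
      funext N x; rw [Finset.mul_sum]
    have e2 : (fun x : ℝ => g0 x * ∑' k : ℕ, ω ^ (2 * k) / ((2 * k)! : ℂ) * X (2 * k) x)
        = fun x : ℝ => ∑' k : ℕ, g0 x * (ω ^ (2 * k) / ((2 * k)! : ℂ) * X (2 * k) x) := by
      funext x; rw [tsum_mul_left]
    rw [e1, e2]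
    exact h
  · -- the differential equation
    intro x hx
    have hEq : deriv (fun y => g0 y * ∑' k : ℕ, ω ^ (2 * k) / ((2 * k)! : ℂ) * X (2 * k) y)
        =ᶠ[nhds x] (fun y => deriv g0 y * (∑' k : ℕ, ω ^ (2*k) / ((2*k)! : ℂ) * X (2*k) y)
          + (g0 y)⁻¹ * ∑' k : ℕ, ω ^ (2*k+2) / ((2*k+1)! : ℂ) * X (2*k+1) y) := by
      filter_upwards [hI.mem_nhds hx] with y hy
      exact (hu1d y hy).deriv
    have H : deriv (deriv (fun y => g0 y * ∑' k : ℕ,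
        ω ^ (2 * k) / ((2 * k)! : ℂ) * X (2 * k) y)) x
        = q x * (g0 x * ∑' k : ℕ, ω ^ (2 * k) / ((2 * k)! : ℂ) * X (2 * k) x)
          + ω ^ 2 * (g0 x * ∑' k : ℕ, ω ^ (2 * k) / ((2 * k)! : ℂ) * X (2 * k) x) := by
      rw [hEq.deriv_eq]
      exact (hvd x hx).deriv
    rw [H]
    ring
end

section
/- Under boundedness assumptions $|g_0| \leq M$ and $|1/g_0| \leq M$ on the interval $[-a,a]$, the recursive integrals satisfy the estimates $|\widetilde{X}^{(n)}(x)| \leq M^{2n} |x|^n$ and $|X^{(n)}(x)| \leq M^{2n} |x|^n$ for all $x \in [-a,a]$ and all $n \geq 0$; consequently the power series $\sum_{n} \frac{|\omega|^n}{n!} |\widetilde{X}^{(n)}(x)|$ converges uniformly on $[-a,a]$ for every $\omega \in \mathbb{C}$. -/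
open scoped Nat

lemma spps_cont_bound {a C : ℝ} (ha : 0 < a) (hC : 0 ≤ C) {wo we : ℝ → ℂ}
    (hwo : ContinuousOn wo (Set.Icc (-a) a)) (hwe : ContinuousOn we (Set.Icc (-a) a))
    (hbo : ∀ x ∈ Set.Icc (-a) a, ‖wo x‖ ≤ C) (hbe : ∀ x ∈ Set.Icc (-a) a, ‖we x‖ ≤ C) :
    ∀ n, ContinuousOn (spps wo we n) (Set.Icc (-a) a) ∧
      ∀ x ∈ Set.Icc (-a) a, ‖spps wo we n x‖ ≤ C ^ n * |x| ^ n := by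
  have haa : -a ≤ a := by linarith
  have h0 : (0:ℝ) ∈ Set.Icc (-a) a := ⟨by linarith, ha.le⟩
  intro n
  induction n with
  | zero =>
    refine ⟨by simpa [spps] using continuousOn_const, fun x _ => by simp [spps]⟩
  | succ n ih =>
    obtain ⟨ihc, ihb⟩ := ih
    set w : ℝ → ℂ := fun t => if (n + 1) % 2 = 1 then wo t else we t with hw
    have hwc : ContinuousOn w (Set.Icc (-a) a) := by
      by_cases h : (n + 1) % 2 = 1 <;> simp only [hw, h, if_true, if_false] <;> simpa
    have hwb : ∀ x ∈ Set.Icc (-a) a, ‖w x‖ ≤ C := by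
      intro x hx
      by_cases h : (n + 1) % 2 = 1 <;> simp only [hw, h, if_true, if_false]
      · exact hbo x hx
      · exact hbe x hx
    have hic : ContinuousOn (fun t => spps wo we n t * w t) (Set.Icc (-a) a) :=
      ihc.mul hwc
    have heq : spps wo we (n + 1) = fun x => (n + 1 : ℂ) *
        ∫ t in (0:ℝ)..x, spps wo we n t * w t := rfl
    have hIcc : Set.uIcc (-a) a = Set.Icc (-a) a := Set.uIcc_of_le haa
    have hint : IntervalIntegrable (fun t => spps wo we n t * w t) MeasureTheory.volume (-a) a :=
      (hic.mono (by rw [hIcc])).intervalIntegrable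
    constructor
    · rw [heq]
      apply ContinuousOn.mul continuousOn_const
      have := intervalIntegral.continuousOn_primitive_interval' hint (by rw [hIcc]; exact h0)
      rwa [hIcc] at this
    · intro x hx
      have hsub : Set.uIcc (0:ℝ) x ⊆ Set.Icc (-a) a := by
        rw [← hIcc]
        exact Set.uIcc_subset_uIcc (by rwa [hIcc]) (by rwa [hIcc])
      have hbound : ‖∫ t in (0:ℝ)..x, spps wo we n t * w t‖ ≤
          |∫ t in (0:ℝ)..x, C ^ (n + 1) * |t| ^ n| := by
        apply intervalIntegral.norm_integral_le_abs_of_norm_le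
        · apply MeasureTheory.ae_restrict_of_forall_mem measurableSet_uIoc
          intro t ht
          have ht' : t ∈ Set.Icc (-a) a := hsub (Set.uIoc_subset_uIcc ht)
          calc ‖spps wo we n t * w t‖ = ‖spps wo we n t‖ * ‖w t‖ := norm_mul _ _
            _ ≤ (C ^ n * |t| ^ n) * C :=
              mul_le_mul (ihb t ht') (hwb t ht') (norm_nonneg _) (by positivity)
            _ = C ^ (n + 1) * |t| ^ n := by ring
        · exact (Continuous.intervalIntegrable (by continuity) _ _)
      have hconst : |∫ t in (0:ℝ)..x, C ^ (n + 1) * |t| ^ n| =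
          C ^ (n + 1) * (|x| ^ (n + 1) / (n + 1)) := by
        rw [intervalIntegral.integral_const_mul, abs_mul, abs_of_nonneg (by positivity),
          abs_integral_abs_pow]
      rw [heq]
      have hnorm : ‖(n + 1 : ℂ) * ∫ t in (0:ℝ)..x, spps wo we n t * w t‖ =
          ((n:ℝ) + 1) * ‖∫ t in (0:ℝ)..x, spps wo we n t * w t‖ := by
        rw [norm_mul]
        congr 1
        have : ((n:ℂ) + 1) = ((n + 1 : ℕ) : ℂ) := by push_cast; ring
        rw [this, Complex.norm_natCast]; push_cast; ring
      rw [hnorm]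
      calc ((n:ℝ) + 1) * ‖∫ t in (0:ℝ)..x, spps wo we n t * w t‖
          ≤ ((n:ℝ) + 1) * (C ^ (n + 1) * (|x| ^ (n + 1) / (n + 1))) := by
            apply mul_le_mul_of_nonneg_left _ (by positivity)
            rw [← hconst]; exact hbound
        _ = C ^ (n + 1) * |x| ^ (n + 1) := by
            field_simp

/-- Estimates `|X̃⁽ⁿ⁾(x)| ≤ M^{2n} |x|ⁿ`, `|X⁽ⁿ⁾(x)| ≤ M^{2n} |x|ⁿ` on `[-a,a]`,
and the uniform convergence of the majorant series. -/
theorem spps_estimates (a M : ℝ) (ha : 0 < a) (ω : ℂ)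
    (g0 : ℝ → ℂ)
    (hg : ContinuousOn g0 (Set.Icc (-a) a))
    (hg0 : ∀ x ∈ Set.Icc (-a) a, g0 x ≠ 0)
    (hM1 : ∀ x ∈ Set.Icc (-a) a, ‖g0 x‖ ≤ M)
    (hM2 : ∀ x ∈ Set.Icc (-a) a, ‖(g0 x)⁻¹‖ ≤ M) :
    (∀ n : ℕ, ∀ x ∈ Set.Icc (-a) a,
      ‖spps (fun t => g0 t ^ 2) (fun t => (g0 t ^ 2)⁻¹) n x‖ ≤ M ^ (2 * n) * |x| ^ n ∧
      ‖spps (fun t => (g0 t ^ 2)⁻¹) (fun t => g0 t ^ 2) n x‖ ≤ M ^ (2 * n) * |x| ^ n) ∧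
    TendstoUniformlyOn
      (fun N x => ∑ n ∈ Finset.range N,
        ‖ω‖ ^ n / (n ! : ℝ) *
          ‖spps (fun t => g0 t ^ 2) (fun t => (g0 t ^ 2)⁻¹) n x‖)
      (fun x => ∑' n : ℕ,
        ‖ω‖ ^ n / (n ! : ℝ) *
          ‖spps (fun t => g0 t ^ 2) (fun t => (g0 t ^ 2)⁻¹) n x‖)
      Filter.atTop (Set.Icc (-a) a) := by
  have h0 : (0:ℝ) ∈ Set.Icc (-a) a := ⟨by linarith, ha.le⟩
  have hM : 0 ≤ M := (norm_nonneg _).trans (hM1 0 h0)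
  have hC : (0:ℝ) ≤ M ^ 2 := by positivity
  have hsq : ContinuousOn (fun t => g0 t ^ 2) (Set.Icc (-a) a) := hg.pow 2
  have hinv : ContinuousOn (fun t => (g0 t ^ 2)⁻¹) (Set.Icc (-a) a) := by
    apply hsq.inv₀
    intro x hx
    exact pow_ne_zero _ (hg0 x hx)
  have hbsq : ∀ x ∈ Set.Icc (-a) a, ‖g0 x ^ 2‖ ≤ M ^ 2 := by
    intro x hx
    rw [norm_pow]
    exact pow_le_pow_left₀ (norm_nonneg _) (hM1 x hx) 2
  have hbinv : ∀ x ∈ Set.Icc (-a) a, ‖(g0 x ^ 2)⁻¹‖ ≤ M ^ 2 := by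
    intro x hx
    rw [← inv_pow, norm_pow]
    exact pow_le_pow_left₀ (norm_nonneg _) (hM2 x hx) 2
  have key1 := spps_cont_bound ha hC hsq hinv hbsq hbinv
  have key2 := spps_cont_bound ha hC hinv hsq hbinv hbsq
  have hb1 : ∀ n, ∀ x ∈ Set.Icc (-a) a,
      ‖spps (fun t => g0 t ^ 2) (fun t => (g0 t ^ 2)⁻¹) n x‖ ≤ M ^ (2 * n) * |x| ^ n := by
    intro n x hx
    have := (key1 n).2 x hx
    rwa [← pow_mul] at this
  constructor
  · intro n x hx
    refine ⟨hb1 n x hx, ?_⟩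
    have := (key2 n).2 x hx
    rwa [← pow_mul] at this
  · apply tendstoUniformlyOn_tsum_nat (u := fun n => (‖ω‖ * (M ^ 2 * a)) ^ n / (n ! : ℝ))
    · exact Real.summable_pow_div_factorial _
    · intro n x hx
      have hxa : |x| ≤ a := abs_le.mpr ⟨hx.1, hx.2⟩
      rw [Real.norm_eq_abs, abs_of_nonneg (by positivity)]
      calc ‖ω‖ ^ n / (n ! : ℝ) * ‖spps (fun t => g0 t ^ 2) (fun t => (g0 t ^ 2)⁻¹) n x‖
          ≤ ‖ω‖ ^ n / (n ! : ℝ) * (M ^ (2 * n) * |x| ^ n) :=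
            mul_le_mul_of_nonneg_left (hb1 n x hx) (by positivity)
        _ ≤ ‖ω‖ ^ n / (n ! : ℝ) * (M ^ (2 * n) * a ^ n) := by
            apply mul_le_mul_of_nonneg_left _ (by positivity)
            exact mul_le_mul_of_nonneg_left
              (pow_le_pow_left₀ (abs_nonneg _) hxa n) (by positivity)
        _ = (‖ω‖ * (M ^ 2 * a)) ^ n / (n ! : ℝ) := by
            rw [mul_pow, mul_pow, pow_mul]
            ring
end

section
/- Under the same hypotheses, with $X^{(0)} \equiv 1$, $X^{(n)}(x) = n\int_0^x X^{(n-1)} (p g_0^2)^{-1}$ for odd $n$ and $X^{(n)}(x) = n\int_0^x X^{(n-1)} g_0^2$ for even $n$, the function $u_2 = g_0 \sum_{\text{odd } n \geq 1} \frac{\omega^n}{n!} X^{(n)}$ solves $(p u_2')' + q u_2 = \omega^2 u_2$ on $I$. -/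
open scoped Nat

open MeasureTheory intervalIntegral Set


lemma hasDerivAt_mul_abs_pow (n : ℕ) (t : ℝ) :
    HasDerivAt (fun s : ℝ => s * |s| ^ n) ((n + 1) * |t| ^ n) t := by
  rcases lt_trichotomy t 0 with h | h | h
  · have hev : (fun s : ℝ => s * (-s) ^ n) =ᶠ[nhds t] (fun s => s * |s| ^ n) := by
      filter_upwards [eventually_lt_nhds h] with s hs
      rw [abs_of_neg hs]
    refine HasDerivAt.congr_of_eventuallyEq ?_ hev.symm
    have h1 : HasDerivAt (fun s : ℝ => s * (-s) ^ n)
        (1 * (-t) ^ n + t * (n * (-t) ^ (n - 1) * (-1))) t :=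
      (hasDerivAt_id t).mul (((hasDerivAt_id t).neg).pow n)
    refine h1.congr_deriv ?_
    rw [abs_of_neg h]
    rcases n with _ | m
    · norm_num
    · simp only [Nat.add_sub_cancel]
      push_cast
      ring
  · subst h
    rcases n with _ | m
    · simp only [pow_zero, mul_one, Nat.cast_zero, zero_add]; exact hasDerivAt_id' 0
    · have key : HasDerivAt (fun s : ℝ => s * |s| ^ (m + 1)) 0 0 := by
        rw [hasDerivAt_iff_tendsto_slope]
        have hev : (fun s : ℝ => |s| ^ (m + 1)) =ᶠ[nhdsWithin 0 {(0:ℝ)}ᶜ]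
            slope (fun s : ℝ => s * |s| ^ (m + 1)) 0 := by
          filter_upwards [self_mem_nhdsWithin] with s hs
          have hs0 : s ≠ 0 := hs
          rw [slope_def_field]
          field_simp
          simp
        have hlim : Filter.Tendsto (fun s : ℝ => |s| ^ (m + 1)) (nhds 0) (nhds 0) := by
          exact (continuous_abs.pow (m+1)).tendsto' 0 0 (by simp)
        exact Filter.Tendsto.congr' hev (hlim.mono_left nhdsWithin_le_nhds)
      simpa using key
  · have hev : (fun s : ℝ => s * s ^ n) =ᶠ[nhds t] (fun s => s * |s| ^ n) := by
      filter_upwards [eventually_gt_nhds h] with s hs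
      rw [abs_of_pos hs]
    refine HasDerivAt.congr_of_eventuallyEq ?_ hev.symm
    have h1 : HasDerivAt (fun s : ℝ => s * s ^ n)
        (1 * t ^ n + t * (n * t ^ (n - 1) * 1)) t :=
      (hasDerivAt_id t).mul ((hasDerivAt_id t).pow n)
    refine h1.congr_deriv ?_
    rw [abs_of_pos h]
    rcases n with _ | m
    · norm_num
    · simp only [Nat.add_sub_cancel]
      push_cast
      ring


open MeasureTheory intervalIntegral Set

lemma primitive_hasDerivAt {a b : ℝ} (ha : a < 0) (hb : 0 < b) {f : ℝ → ℂ}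
    (hf : ContinuousOn f (Set.Ioo a b)) {y : ℝ} (hy : y ∈ Set.Ioo a b) :
    HasDerivAt (fun x => ∫ t in (0:ℝ)..x, f t) (f y) y := by
  have h0 : (0:ℝ) ∈ Set.Ioo a b := ⟨ha, hb⟩
  have hsub : Set.uIcc (0:ℝ) y ⊆ Set.Ioo a b :=
    Set.ordConnected_Ioo.uIcc_subset h0 hy
  exact integral_hasDerivAt_right (hf.mono hsub).intervalIntegrable
    (hf.stronglyMeasurableAtFilter isOpen_Ioo y hy)
    (hf.continuousAt (isOpen_Ioo.mem_nhds hy))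

lemma spps_continuousOn {a b : ℝ} (ha : a < 0) (hb : 0 < b) {w₁ w₂ : ℝ → ℂ}
    (h₁ : ContinuousOn w₁ (Set.Ioo a b)) (h₂ : ContinuousOn w₂ (Set.Ioo a b)) :
    ∀ n, ContinuousOn (spps w₁ w₂ n) (Set.Ioo a b) := by
  intro n
  induction n with
  | zero => exact continuousOn_const
  | succ m ih =>
      intro y hy
      have hint : ContinuousOn
          (fun t => spps w₁ w₂ m t * (if (m + 1) % 2 = 1 then w₁ t else w₂ t))
          (Set.Ioo a b) := by
        by_cases h : (m + 1) % 2 = 1 <;> simp only [h, if_true, if_false] <;>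
          [exact ih.mul h₁; exact ih.mul h₂]
      have := (primitive_hasDerivAt ha hb hint hy).continuousAt
      exact (continuousAt_const.mul this).continuousWithinAt

lemma spps_hasDerivAt {a b : ℝ} (ha : a < 0) (hb : 0 < b) {w₁ w₂ : ℝ → ℂ}
    (h₁ : ContinuousOn w₁ (Set.Ioo a b)) (h₂ : ContinuousOn w₂ (Set.Ioo a b))
    (n : ℕ) {y : ℝ} (hy : y ∈ Set.Ioo a b) :
    HasDerivAt (spps w₁ w₂ (n + 1))
      (((n:ℂ) + 1) * (spps w₁ w₂ n y * (if (n + 1) % 2 = 1 then w₁ y else w₂ y))) y := by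
  have hint : ContinuousOn
      (fun t => spps w₁ w₂ n t * (if (n + 1) % 2 = 1 then w₁ t else w₂ t))
      (Set.Ioo a b) := by
    by_cases h : (n + 1) % 2 = 1 <;> simp only [h, if_true, if_false] <;>
      [exact (spps_continuousOn ha hb h₁ h₂ n).mul h₁;
       exact (spps_continuousOn ha hb h₁ h₂ n).mul h₂]
  exact ((primitive_hasDerivAt ha hb hint hy).const_mul _)


open MeasureTheory intervalIntegral Set

lemma integral_abs_pow (n : ℕ) (x : ℝ) :
    ∫ t in (0:ℝ)..x, |t| ^ n = x * |x| ^ n / (n + 1) := by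
  have h : ∫ t in (0:ℝ)..x, (((n:ℝ) + 1) * |t| ^ n)
      = x * |x| ^ n - 0 * |0| ^ n :=
    integral_eq_sub_of_hasDerivAt (fun t _ => hasDerivAt_mul_abs_pow n t)
      ((continuous_const.mul (continuous_abs.pow n)).intervalIntegrable 0 x)
  rw [intervalIntegral.integral_const_mul] at h
  have hn : ((n:ℝ) + 1) ≠ 0 := by positivity
  field_simp at h ⊢
  linarith [h]

lemma spps_norm_le {a b C : ℝ} (ha : a < 0) (hb : 0 < b) (hC : 0 ≤ C) {w₁ w₂ : ℝ → ℂ}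
    (h₁c : ContinuousOn w₁ (Set.Ioo a b)) (h₂c : ContinuousOn w₂ (Set.Ioo a b))
    (h₁ : ∀ x ∈ Set.Ioo a b, ‖w₁ x‖ ≤ C) (h₂ : ∀ x ∈ Set.Ioo a b, ‖w₂ x‖ ≤ C) :
    ∀ n, ∀ x ∈ Set.Ioo a b, ‖spps w₁ w₂ n x‖ ≤ (C * |x|) ^ n := by
  intro n
  induction n with
  | zero => intro x _; simp [spps]
  | succ m ih =>
      intro x hx
      have hsub : Set.uIcc (0:ℝ) x ⊆ Set.Ioo a b :=
        Set.ordConnected_Ioo.uIcc_subset ⟨ha, hb⟩ hx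
      have hsub' : Set.uIoc (0:ℝ) x ⊆ Set.Ioo a b :=
        fun t ht => hsub (Set.Ioc_subset_Icc_self ht)
      have hbound : ∀ᵐ t ∂(volume.restrict (Set.uIoc (0:ℝ) x)),
          ‖spps w₁ w₂ m t * (if (m + 1) % 2 = 1 then w₁ t else w₂ t)‖
            ≤ C ^ (m + 1) * |t| ^ m := by
        refine ae_restrict_of_forall_mem measurableSet_uIoc fun t ht => ?_
        have ht' : t ∈ Set.Ioo a b := hsub' ht
        have h1 : ‖spps w₁ w₂ m t‖ ≤ (C * |t|) ^ m := ih t ht'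
        have h2 : ‖(if (m + 1) % 2 = 1 then w₁ t else w₂ t)‖ ≤ C := by
          split <;> [exact h₁ t ht'; exact h₂ t ht']
        calc ‖spps w₁ w₂ m t * _‖ = ‖spps w₁ w₂ m t‖ * ‖_‖ := norm_mul _ _
          _ ≤ (C * |t|) ^ m * C := by
              exact mul_le_mul h1 h2 (norm_nonneg _) (by positivity)
          _ = C ^ (m + 1) * |t| ^ m := by rw [mul_pow]; ring
      have hgint : IntervalIntegrable (fun t => C ^ (m + 1) * |t| ^ m) volume 0 x :=
        (continuous_const.mul (continuous_abs.pow m)).intervalIntegrable 0 x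
      have hle : ‖∫ t in (0:ℝ)..x,
          spps w₁ w₂ m t * (if (m + 1) % 2 = 1 then w₁ t else w₂ t)‖
          ≤ |∫ t in (0:ℝ)..x, C ^ (m + 1) * |t| ^ m| :=
        intervalIntegral.norm_integral_le_abs_of_norm_le hbound hgint
      have hval : |∫ t in (0:ℝ)..x, C ^ (m + 1) * |t| ^ m|
          = C ^ (m + 1) * |x| ^ (m + 1) / (m + 1) := by
        rw [intervalIntegral.integral_const_mul, integral_abs_pow]
        have e1 : |x * |x| ^ m| = |x| ^ (m + 1) := by
          rw [abs_mul, abs_pow, abs_abs, pow_succ]; ring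
        rw [abs_mul, abs_div, e1, abs_of_nonneg (pow_nonneg hC _),
          abs_of_pos (by positivity : (0:ℝ) < (m:ℝ) + 1)]
        ring
      show ‖((m:ℂ) + 1) * _‖ ≤ _
      rw [norm_mul]
      have hnm : ‖((m:ℂ) + 1)‖ = (m:ℝ) + 1 := by
        have : ((m:ℂ) + 1) = ((m + 1 : ℕ) : ℂ) := by push_cast; ring
        rw [this, Complex.norm_natCast]; push_cast; ring
      rw [hnm]
      calc ((m:ℝ) + 1) * ‖_‖ ≤ ((m:ℝ) + 1) * (C ^ (m+1) * |x| ^ (m+1) / (m+1)) := by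
            refine mul_le_mul_of_nonneg_left ?_ (by positivity)
            rw [← hval]; exact hle
        _ = (C * |x|) ^ (m + 1) := by
            rw [mul_pow]; field_simp

lemma aux_arith (w c l f n : ℝ) (hf : f ≠ 0) (hn : n + 1 ≠ 0) (m : ℕ) :
    w ^ (m + 1) / ((n + 1) * f) * (n + 1) * ((c * l) ^ m * c)
      = w * c * ((w * c * l) ^ m / f) := by
  field_simp
  ring

lemma aux_arith2 (w c l f n : ℝ) (hf : f ≠ 0) (hn : n ≠ 0) (m : ℕ) :
    w ^ (m + 2) / (n * f) * n * ((c * l) ^ m * c)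
      = w ^ 2 * c * ((w * c * l) ^ m / f) := by
  field_simp
  ring

lemma final_algebra (P G dG Q Fx Hx ω : ℂ) (hP : P ≠ 0) (hG : G ≠ 0) :
    -(Q * G) * Fx + P * dG * (Hx * (P * G ^ 2)⁻¹) +
      (-dG / G ^ 2 * Hx + G⁻¹ * (ω ^ 2 * G ^ 2 * Fx)) + Q * (G * Fx)
    = ω ^ 2 * (G * Fx) := by
  field_simp
  ring

lemma aux_arith3 (z2 z f N X W : ℂ) (hf : f ≠ 0) (hN : N ≠ 0) :
    z2 * z / (N * f) * N * (X * W) = z2 * W * (z / f * X) := by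
  field_simp

lemma aux_arith4 (P G Hy : ℂ) (hP : P ≠ 0) (hG : G ≠ 0) :
    P * (G * (Hy * (P * G ^ 2)⁻¹)) = G⁻¹ * Hy := by
  field_simp

/-- `u₂ = g₀ ∑_{odd n} ωⁿ/n! X⁽ⁿ⁾` solves `(p u₂')' + q u₂ = ω² u₂`, where `X⁽ⁿ⁾`
has weight `(p g₀²)⁻¹` for odd `n` and `g₀²` for even `n`. -/
theorem spps_u2_sturm_liouville (a b : ℝ) (ha : a < 0) (hb : 0 < b) (ω : ℂ)
    (p q g0 : ℝ → ℂ)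
    (hp : ContDiffOn ℝ 1 p (Set.Ioo a b))
    (hp0 : ∀ x ∈ Set.Ioo a b, p x ≠ 0)
    (hq : ContinuousOn q (Set.Ioo a b))
    (hg : ContDiffOn ℝ 2 g0 (Set.Ioo a b))
    (hg0 : ∀ x ∈ Set.Ioo a b, g0 x ≠ 0)
    (heq : ∀ x ∈ Set.Ioo a b,
      deriv (fun y => p y * deriv g0 y) x + q x * g0 x = 0)
    (hbd : ∃ M : ℝ, ∀ x ∈ Set.Ioo a b,
      ‖g0 x‖ ≤ M ∧ ‖(g0 x)⁻¹‖ ≤ M ∧ ‖p x‖ ≤ M ∧ ‖(p x)⁻¹‖ ≤ M) :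
    ∀ x ∈ Set.Ioo a b,
      deriv (fun y => p y * deriv (fun s => g0 s * ∑' k : ℕ,
          ω ^ (2 * k + 1) / ((2 * k + 1)! : ℂ) *
            spps (fun t => (p t * g0 t ^ 2)⁻¹) (fun t => g0 t ^ 2) (2 * k + 1) s) y) x +
        q x * (g0 x * ∑' k : ℕ,
          ω ^ (2 * k + 1) / ((2 * k + 1)! : ℂ) *
            spps (fun t => (p t * g0 t ^ 2)⁻¹) (fun t => g0 t ^ 2) (2 * k + 1) x) =
      ω ^ 2 * (g0 x * ∑' k : ℕ,
          ω ^ (2 * k + 1) / ((2 * k + 1)! : ℂ) *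
            spps (fun t => (p t * g0 t ^ 2)⁻¹) (fun t => g0 t ^ 2) (2 * k + 1) x) := by
  have h0S : (0:ℝ) ∈ Set.Ioo a b := ⟨ha, hb⟩
  obtain ⟨M, hM⟩ := hbd
  have hM0 : 0 ≤ M := le_trans (norm_nonneg _) (hM 0 h0S).1
  set w₁ : ℝ → ℂ := fun t => (p t * g0 t ^ 2)⁻¹ with hw₁def
  set w₂ : ℝ → ℂ := fun t => g0 t ^ 2 with hw₂def
  intro x hx
  have hpc : ContinuousOn p (Set.Ioo a b) := hp.continuousOn
  have hgc : ContinuousOn g0 (Set.Ioo a b) := hg.continuousOn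
  have hw₁c : ContinuousOn w₁ (Set.Ioo a b) :=
    (hpc.mul (hgc.pow 2)).inv₀ fun t ht => mul_ne_zero (hp0 t ht) (pow_ne_zero _ (hg0 t ht))
  have hw₂c : ContinuousOn w₂ (Set.Ioo a b) := hgc.pow 2
  set C : ℝ := M ^ 3 + M ^ 2 with hCdef
  have hC0 : 0 ≤ C := by positivity
  have hw₁b : ∀ t ∈ Set.Ioo a b, ‖w₁ t‖ ≤ C := by
    intro t ht
    obtain ⟨h1, h2, h3, h4⟩ := hM t ht
    have he : w₁ t = (p t)⁻¹ * ((g0 t)⁻¹) ^ 2 := by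
      simp only [hw₁def]
      rw [mul_inv, inv_pow]
    rw [he, norm_mul, norm_pow]
    have hle : ‖(p t)⁻¹‖ * ‖(g0 t)⁻¹‖ ^ 2 ≤ M * M ^ 2 :=
      mul_le_mul h4 (pow_le_pow_left₀ (norm_nonneg _) h2 2) (by positivity) hM0
    nlinarith [sq_nonneg M]
  have hw₂b : ∀ t ∈ Set.Ioo a b, ‖w₂ t‖ ≤ C := by
    intro t ht
    have he : ‖w₂ t‖ = ‖g0 t‖ ^ 2 := by
      simp only [hw₂def]; rw [norm_pow]
    rw [he]
    have h2 : ‖g0 t‖ ^ 2 ≤ M ^ 2 := pow_le_pow_left₀ (norm_nonneg _) (hM t ht).1 2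
    nlinarith [pow_nonneg hM0 3, pow_nonneg hM0 2]
  set L : ℝ := max b (-a) with hLdef
  have hL0 : 0 < L := lt_of_lt_of_le hb (le_max_left _ _)
  have habsle : ∀ t ∈ Set.Ioo a b, |t| ≤ L := by
    intro t ht
    rw [abs_le]
    constructor
    · have h1 := ht.1; have h2 := le_max_right b (-a); rw [hLdef]; linarith
    · have h1 := ht.2; have h2 := le_max_left b (-a); rw [hLdef]; linarith
  set r : ℝ := ‖ω‖ * C * L with hrdef
  have hr0 : 0 ≤ r := by positivity
  have hXb : ∀ n, ∀ t ∈ Set.Ioo a b, ‖spps w₁ w₂ n t‖ ≤ (C * L) ^ n := by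
    intro n t ht
    calc ‖spps w₁ w₂ n t‖ ≤ (C * |t|) ^ n :=
          spps_norm_le ha hb hC0 hw₁c hw₂c hw₁b hw₂b n t ht
      _ ≤ (C * L) ^ n := by
          apply pow_le_pow_left₀ (by positivity)
          exact mul_le_mul_of_nonneg_left (habsle t ht) hC0
  have hX0 : ∀ n, spps w₁ w₂ (n + 1) 0 = 0 := by
    intro n
    show ((n:ℂ) + 1) * ∫ t in (0:ℝ)..(0:ℝ), _ = 0
    rw [intervalIntegral.integral_same, mul_zero]
  set F : ℝ → ℂ := fun y => ∑' k : ℕ, ω ^ (2 * k + 1) / ((2 * k + 1)! : ℂ) *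
      spps w₁ w₂ (2 * k + 1) y with hFdef
  set H : ℝ → ℂ := fun y => ∑' k : ℕ, ω ^ (2 * k + 1) / ((2 * k)! : ℂ) *
      spps w₁ w₂ (2 * k) y with hHdef
  have hfactC : ∀ m : ℕ, ((m)! : ℂ) ≠ 0 := fun m => Nat.cast_ne_zero.mpr (Nat.factorial_ne_zero m)
  have hnormc : ∀ m j : ℕ, ‖ω ^ m / ((j)! : ℂ)‖ = ‖ω‖ ^ m / ((j)! : ℝ) := by
    intro m j
    rw [norm_div, norm_pow, Complex.norm_natCast]
  have hbase : Summable (fun n : ℕ => r ^ n / (n)!) := Real.summable_pow_div_factorial r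
  have hinj1 : Function.Injective (fun k : ℕ => 2 * k) := fun u v h => by
    simp only at h; omega
  have hinj2 : Function.Injective (fun k : ℕ => 2 * k - 1) := fun u v h => by
    simp only at h; omega
  have hsum_even : Summable (fun k : ℕ => r ^ (2 * k) / ((2 * k))!) := hbase.comp_injective hinj1
  have hsum_odd : Summable (fun k : ℕ => r ^ (2 * k - 1) / ((2 * k - 1))!) :=
    hbase.comp_injective hinj2
  -- derivatives of the terms of F
  have hgd : ∀ (k : ℕ) (y : ℝ), y ∈ Set.Ioo a b →
      HasDerivAt (fun z => ω ^ (2 * k + 1) / ((2 * k + 1)! : ℂ) * spps w₁ w₂ (2 * k + 1) z)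
        (ω ^ (2 * k + 1) / ((2 * k + 1)! : ℂ) * (((2 * k : ℕ) : ℂ) + 1) *
          (spps w₁ w₂ (2 * k) y * w₁ y)) y := by
    intro k y hy
    have h1 := HasDerivAt.const_mul (ω ^ (2 * k + 1) / ((2 * k + 1)! : ℂ))
      (spps_hasDerivAt ha hb hw₁c hw₂c (2 * k) hy)
    rw [if_pos (by omega : (2 * k + 1) % 2 = 1)] at h1
    refine h1.congr_deriv ?_
    ring
  have hgu : ∀ (k : ℕ) (y : ℝ), y ∈ Set.Ioo a b →
      ‖ω ^ (2 * k + 1) / ((2 * k + 1)! : ℂ) * (((2 * k : ℕ) : ℂ) + 1) *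
          (spps w₁ w₂ (2 * k) y * w₁ y)‖ ≤ ‖ω‖ * C * (r ^ (2 * k) / ((2 * k))!) := by
    intro k y hy
    rw [norm_mul, norm_mul, hnormc]
    have e2 : ‖(((2 * k : ℕ) : ℂ) + 1)‖ = (2 * k : ℝ) + 1 := by
      rw [show (((2 * k : ℕ) : ℂ) + 1) = (((2 * k + 1 : ℕ)) : ℂ) by push_cast; ring,
        Complex.norm_natCast]
      push_cast; ring
    rw [e2]
    have h1 : ‖spps w₁ w₂ (2 * k) y‖ ≤ (C * L) ^ (2 * k) := hXb _ y hy
    have h2 : ‖w₁ y‖ ≤ C := hw₁b y hy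
    calc ‖ω‖ ^ (2 * k + 1) / ((2 * k + 1)! : ℝ) * ((2 * k : ℝ) + 1) *
          ‖spps w₁ w₂ (2 * k) y * w₁ y‖
        ≤ ‖ω‖ ^ (2 * k + 1) / ((2 * k + 1)! : ℝ) * ((2 * k : ℝ) + 1) *
          ((C * L) ^ (2 * k) * C) := by
          refine mul_le_mul_of_nonneg_left ?_ (by positivity)
          rw [norm_mul]
          exact mul_le_mul h1 h2 (norm_nonneg _) (by positivity)
      _ = ‖ω‖ * C * (r ^ (2 * k) / ((2 * k))!) := by
          have hfs : ((2 * k + 1)! : ℝ) = ((2 * k : ℝ) + 1) * ((2 * k)! : ℝ) := by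
            rw [Nat.factorial_succ]; push_cast; ring
          have hf0 : ((2 * k)! : ℝ) ≠ 0 := by
            exact_mod_cast Nat.factorial_ne_zero _
          rw [hrdef, hfs]
          exact aux_arith ‖ω‖ C L ((2 * k)! : ℝ) (2 * (k : ℝ)) hf0 (by positivity) (2 * k)
  have husum : Summable (fun k : ℕ => ‖ω‖ * C * (r ^ (2 * k) / ((2 * k))!)) :=
    hsum_even.mul_left _
  have hF0 : Summable (fun k : ℕ => ω ^ (2 * k + 1) / ((2 * k + 1)! : ℂ) *
      spps w₁ w₂ (2 * k + 1) 0) := by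
    have he : (fun k : ℕ => ω ^ (2 * k + 1) / ((2 * k + 1)! : ℂ) * spps w₁ w₂ (2 * k + 1) 0)
        = fun _ => 0 := by
      funext k; rw [hX0 (2 * k), mul_zero]
    rw [he]; exact summable_zero
  have hFd : ∀ y ∈ Set.Ioo a b, HasDerivAt F
      (∑' k : ℕ, ω ^ (2 * k + 1) / ((2 * k + 1)! : ℂ) * (((2 * k : ℕ) : ℂ) + 1) *
        (spps w₁ w₂ (2 * k) y * w₁ y)) y := fun y hy =>
    hasDerivAt_tsum_of_isPreconnected husum isOpen_Ioo isPreconnected_Ioo hgd hgu h0S hF0 hy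
  have hcoef : ∀ k : ℕ, ω ^ (2 * k + 1) / ((2 * k + 1)! : ℂ) * (((2 * k : ℕ) : ℂ) + 1)
      = ω ^ (2 * k + 1) / ((2 * k)! : ℂ) := by
    intro k
    have h2 : ((2 * k)! : ℂ) ≠ 0 := hfactC _
    have h1 : ((2 * k : ℕ) : ℂ) + 1 ≠ 0 := by
      rw [show ((2 * k : ℕ) : ℂ) + 1 = ((2 * k + 1 : ℕ) : ℂ) by push_cast; ring]
      exact Nat.cast_ne_zero.mpr (by omega)
    have hfs : ((2 * k + 1)! : ℂ) = (((2 * k : ℕ) : ℂ) + 1) * ((2 * k)! : ℂ) := by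
      rw [Nat.factorial_succ]; push_cast; ring
    rw [hfs, div_mul_eq_mul_div,
      mul_comm (ω ^ (2 * k + 1)) (((2 * k : ℕ) : ℂ) + 1), mul_div_mul_left _ _ h1]
  have hGeq : ∀ y : ℝ, (∑' k : ℕ, ω ^ (2 * k + 1) / ((2 * k + 1)! : ℂ) *
      (((2 * k : ℕ) : ℂ) + 1) * (spps w₁ w₂ (2 * k) y * w₁ y)) = H y * w₁ y := by
    intro y
    rw [hHdef, ← tsum_mul_right]
    congr 1
    funext k
    rw [hcoef k, mul_assoc]
  have hFd' : ∀ y ∈ Set.Ioo a b, HasDerivAt F (H y * w₁ y) y := fun y hy => by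
    have h := hFd y hy; rwa [hGeq y] at h
  -- derivatives of the terms of H
  have hhd : ∀ (k : ℕ) (y : ℝ), y ∈ Set.Ioo a b →
      HasDerivAt (fun z => ω ^ (2 * k + 1) / ((2 * k)! : ℂ) * spps w₁ w₂ (2 * k) z)
        (ω ^ (2 * k + 1) / ((2 * k)! : ℂ) * ((2 * k : ℕ) : ℂ) *
          (spps w₁ w₂ (2 * k - 1) y * w₂ y)) y := by
    intro k y hy
    match k with
    | 0 =>
      have he : (fun z => ω ^ (2 * 0 + 1) / ((2 * 0)! : ℂ) * spps w₁ w₂ (2 * 0) z)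
          = fun _ => ω ^ (2 * 0 + 1) / ((2 * 0)! : ℂ) := by
        funext z
        show _ * (1 : ℂ) = _
        rw [mul_one]
      rw [he]
      have : (ω ^ (2 * 0 + 1) / ((2 * 0)! : ℂ) * ((2 * 0 : ℕ) : ℂ) *
          (spps w₁ w₂ (2 * 0 - 1) y * w₂ y)) = 0 := by
        norm_num
      rw [this]
      exact hasDerivAt_const y _
    | (k + 1) =>
      have hidx2 : 2 * (k + 1) - 1 = 2 * k + 1 := by omega
      have hidx : 2 * (k + 1) = (2 * k + 1) + 1 := by ring
      rw [hidx2, hidx]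
      have h1 := HasDerivAt.const_mul (ω ^ ((2 * k + 1) + 1 + 1) / (((2 * k + 1) + 1)! : ℂ))
        (spps_hasDerivAt ha hb hw₁c hw₂c (2 * k + 1) hy)
      rw [if_neg (by omega : ¬ (2 * k + 1 + 1) % 2 = 1)] at h1
      refine h1.congr_deriv ?_
      push_cast
      ring
  have hhu : ∀ (k : ℕ) (y : ℝ), y ∈ Set.Ioo a b →
      ‖ω ^ (2 * k + 1) / ((2 * k)! : ℂ) * ((2 * k : ℕ) : ℂ) *
        (spps w₁ w₂ (2 * k - 1) y * w₂ y)‖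
      ≤ ‖ω‖ ^ 2 * C * (r ^ (2 * k - 1) / ((2 * k - 1))!) := by
    intro k y hy
    match k with
    | 0 =>
      have hz : (ω ^ (2 * 0 + 1) / ((2 * 0)! : ℂ) * ((2 * 0 : ℕ) : ℂ) *
          (spps w₁ w₂ (2 * 0 - 1) y * w₂ y)) = 0 := by norm_num
      rw [hz, norm_zero]
      positivity
    | (k + 1) =>
      have hidx2 : 2 * (k + 1) - 1 = 2 * k + 1 := by omega
      rw [hidx2, norm_mul, norm_mul, hnormc, Complex.norm_natCast,
        show 2 * (k + 1) + 1 = 2 * k + 1 + 2 from by ring]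
      have h1 : ‖spps w₁ w₂ (2 * k + 1) y‖ ≤ (C * L) ^ (2 * k + 1) := hXb _ y hy
      have h2 : ‖w₂ y‖ ≤ C := hw₂b y hy
      calc ‖ω‖ ^ (2 * k + 1 + 2) / ((2 * (k + 1))! : ℝ) * ((2 * (k + 1) : ℕ) : ℝ) *
            ‖spps w₁ w₂ (2 * k + 1) y * w₂ y‖
          ≤ ‖ω‖ ^ (2 * k + 1 + 2) / ((2 * (k + 1))! : ℝ) * ((2 * (k + 1) : ℕ) : ℝ) *
            ((C * L) ^ (2 * k + 1) * C) := by
            refine mul_le_mul_of_nonneg_left ?_ (by positivity)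
            rw [norm_mul]
            exact mul_le_mul h1 h2 (norm_nonneg _) (by positivity)
        _ = ‖ω‖ ^ 2 * C * (r ^ (2 * k + 1) / ((2 * k + 1))!) := by
            have hfs : ((2 * (k + 1))! : ℝ) = ((2 * (k + 1) : ℕ) : ℝ) * ((2 * k + 1)! : ℝ) := by
              rw [show 2 * (k + 1) = (2 * k + 1) + 1 from by ring, Nat.factorial_succ]
              push_cast; ring
            have hf0 : ((2 * k + 1)! : ℝ) ≠ 0 := by
              exact_mod_cast Nat.factorial_ne_zero _
            have hn0 : ((2 * (k + 1) : ℕ) : ℝ) ≠ 0 := Nat.cast_ne_zero.mpr (by omega)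
            rw [hrdef, hfs]
            exact aux_arith2 ‖ω‖ C L ((2 * k + 1)! : ℝ) ((2 * (k + 1) : ℕ) : ℝ) hf0 hn0
              (2 * k + 1)
  have hvsum : Summable (fun k : ℕ => ‖ω‖ ^ 2 * C * (r ^ (2 * k - 1) / ((2 * k - 1))!)) :=
    hsum_odd.mul_left _
  have hH0 : Summable (fun k : ℕ => ω ^ (2 * k + 1) / ((2 * k)! : ℂ) *
      spps w₁ w₂ (2 * k) 0) := by
    apply summable_of_ne_finset_zero (s := {0})
    intro k hk
    have hk' : k ≠ 0 := by simpa using hk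
    rw [show 2 * k = (2 * k - 1) + 1 by omega, hX0, mul_zero]
  have hHd : ∀ y ∈ Set.Ioo a b, HasDerivAt H
      (∑' k : ℕ, ω ^ (2 * k + 1) / ((2 * k)! : ℂ) * ((2 * k : ℕ) : ℂ) *
        (spps w₁ w₂ (2 * k - 1) y * w₂ y)) y := fun y hy =>
    hasDerivAt_tsum_of_isPreconnected hvsum isOpen_Ioo isPreconnected_Ioo hhd hhu h0S hH0 hy
  have hHsum_eq : ∀ y ∈ Set.Ioo a b, (∑' k : ℕ, ω ^ (2 * k + 1) / ((2 * k)! : ℂ) *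
      ((2 * k : ℕ) : ℂ) * (spps w₁ w₂ (2 * k - 1) y * w₂ y)) = ω ^ 2 * w₂ y * F y := by
    intro y hy
    have hsummable : Summable (fun k : ℕ => ω ^ (2 * k + 1) / ((2 * k)! : ℂ) *
        ((2 * k : ℕ) : ℂ) * (spps w₁ w₂ (2 * k - 1) y * w₂ y)) :=
      Summable.of_norm_bounded hvsum (fun k => hhu k y hy)
    rw [hsummable.tsum_eq_zero_add]
    have h00 : ω ^ (2 * 0 + 1) / ((2 * 0)! : ℂ) * ((2 * 0 : ℕ) : ℂ) *
        (spps w₁ w₂ (2 * 0 - 1) y * w₂ y) = 0 := by norm_num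
    rw [h00, zero_add]
    have hterm : ∀ k : ℕ, ω ^ (2 * (k + 1) + 1) / ((2 * (k + 1))! : ℂ) *
        ((2 * (k + 1) : ℕ) : ℂ) * (spps w₁ w₂ (2 * (k + 1) - 1) y * w₂ y)
        = (ω ^ 2 * w₂ y) * (ω ^ (2 * k + 1) / ((2 * k + 1)! : ℂ) *
            spps w₁ w₂ (2 * k + 1) y) := by
      intro k
      have hidx2 : 2 * (k + 1) - 1 = 2 * k + 1 := by omega
      have hfs : ((2 * (k + 1))! : ℂ) = ((2 * (k + 1) : ℕ) : ℂ) * ((2 * k + 1)! : ℂ) := by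
        rw [show 2 * (k + 1) = (2 * k + 1) + 1 from by ring, Nat.factorial_succ]
        push_cast; ring
      have hn0 : ((2 * (k + 1) : ℕ) : ℂ) ≠ 0 := Nat.cast_ne_zero.mpr (by omega)
      have hf0 : ((2 * k + 1)! : ℂ) ≠ 0 := hfactC _
      rw [hidx2, hfs]
      have hpow : ω ^ (2 * (k + 1) + 1) = ω ^ 2 * ω ^ (2 * k + 1) := by
        rw [show 2 * (k + 1) + 1 = 2 + (2 * k + 1) from by ring, pow_add]
      rw [hpow]
      exact aux_arith3 (ω ^ 2) (ω ^ (2 * k + 1)) ((2 * k + 1)! : ℂ)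
        ((2 * (k + 1) : ℕ) : ℂ) (spps w₁ w₂ (2 * k + 1) y) (w₂ y) hf0 hn0
    calc (∑' k : ℕ, ω ^ (2 * (k + 1) + 1) / ((2 * (k + 1))! : ℂ) *
          ((2 * (k + 1) : ℕ) : ℂ) * (spps w₁ w₂ (2 * (k + 1) - 1) y * w₂ y))
        = ∑' k : ℕ, (ω ^ 2 * w₂ y) * (ω ^ (2 * k + 1) / ((2 * k + 1)! : ℂ) *
            spps w₁ w₂ (2 * k + 1) y) := tsum_congr hterm
      _ = ω ^ 2 * w₂ y * F y := by rw [tsum_mul_left, hFdef]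
  have hHd' : ∀ y ∈ Set.Ioo a b, HasDerivAt H (ω ^ 2 * w₂ y * F y) y := fun y hy => by
    have h := hHd y hy; rwa [hHsum_eq y hy] at h
  -- assembling
  have hgdiffAt : ∀ y ∈ Set.Ioo a b, DifferentiableAt ℝ g0 y := fun y hy =>
    (hg.differentiableOn (by norm_num)).differentiableAt (isOpen_Ioo.mem_nhds hy)
  have hu2d : ∀ y ∈ Set.Ioo a b, HasDerivAt (fun s => g0 s * F s)
      (deriv g0 y * F y + g0 y * (H y * w₁ y)) y := fun y hy =>
    ((hgdiffAt y hy).hasDerivAt).mul (hFd' y hy)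
  have hdg1 : ContDiffOn ℝ 1 (deriv g0) (Set.Ioo a b) :=
    hg.deriv_of_isOpen isOpen_Ioo (by norm_num)
  have hpdiff : DifferentiableAt ℝ p x :=
    (hp.differentiableOn (by norm_num)).differentiableAt (isOpen_Ioo.mem_nhds hx)
  have hdgdiff : DifferentiableAt ℝ (deriv g0) x :=
    (hdg1.differentiableOn (by norm_num)).differentiableAt (isOpen_Ioo.mem_nhds hx)
  have hpdg : HasDerivAt (fun y => p y * deriv g0 y)
      (deriv (fun y => p y * deriv g0 y) x) x :=
    (hpdiff.mul hdgdiff).hasDerivAt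
  have hinner : ∀ y ∈ Set.Ioo a b,
      p y * deriv (fun s => g0 s * F s) y
        = p y * deriv g0 y * F y + (g0 y)⁻¹ * H y := by
    intro y hy
    rw [(hu2d y hy).deriv]
    have hw : p y * (g0 y * (H y * w₁ y)) = (g0 y)⁻¹ * H y := by
      simp only [hw₁def]
      exact aux_arith4 (p y) (g0 y) (H y) (hp0 y hy) (hg0 y hy)
    rw [mul_add, ← mul_assoc, hw]
  have hev : (fun y => p y * deriv (fun s => g0 s * F s) y)
      =ᶠ[nhds x] (fun y => p y * deriv g0 y * F y + (g0 y)⁻¹ * H y) := by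
    filter_upwards [isOpen_Ioo.mem_nhds hx] with y hy using hinner y hy
  have ht2 : HasDerivAt (fun y => p y * deriv g0 y * F y)
      (deriv (fun y => p y * deriv g0 y) x * F x + p x * deriv g0 x * (H x * w₁ x)) x :=
    hpdg.mul (hFd' x hx)
  have ht3 : HasDerivAt (fun y => (g0 y)⁻¹) (-(deriv g0 x) / g0 x ^ 2) x := by
    have h := (hasDerivAt_const x (1 : ℂ)).div ((hgdiffAt x hx).hasDerivAt) (hg0 x hx)
    simp only [Pi.div_def, one_div, zero_mul, one_mul, zero_sub] at h
    exact h
  have ht4 : HasDerivAt (fun y => (g0 y)⁻¹ * H y)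
      (-(deriv g0 x) / g0 x ^ 2 * H x + (g0 x)⁻¹ * (ω ^ 2 * w₂ x * F x)) x :=
    ht3.mul (hHd' x hx)
  have htotal := ht2.add ht4
  have hderiv_eq : deriv (fun y => p y * deriv (fun s => g0 s * F s) y) x
      = deriv (fun y => p y * deriv g0 y * F y + (g0 y)⁻¹ * H y) x := hev.deriv_eq
  show deriv (fun y => p y * deriv (fun s => g0 s * F s) y) x + q x * (g0 x * F x)
      = ω ^ 2 * (g0 x * F x)
  clear_value F H
  rw [hderiv_eq, (show HasDerivAt (fun y => p y * deriv g0 y * F y + (g0 y)⁻¹ * H y) _ x from htotal).deriv]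
  have hD : deriv (fun y => p y * deriv g0 y) x = -(q x * g0 x) := by
    have h := heq x hx
    linear_combination h
  rw [hD]
  simp only [hw₁def, hw₂def]
  exact final_algebra (p x) (g0 x) (deriv g0 x) (q x) (F x) (H x) ω (hp0 x hx) (hg0 x hx)
end

section
/- Let $u_1 = g_0 \sum_{\text{even } n} \frac{\omega^n}{n!} \widetilde{X}^{(n)}$ and $u_2 = g_0 \sum_{\text{odd } n} \frac{\omega^{n-1}}{n!} X^{(n)}$ be the SPPS solutions of $(p u')' + q u = \omega^2 u$. Then the initial values satisfy $u_1(0) = g_0(0)$, $u_1'(0) = g_0'(0)$, $u_2(0) = 0$, and $u_2'(0) = \frac{1}{g_0(0) p(0)}$. In particular $u_1$ and $u_2$ are linearly independent, so $c_1 u_1 + c_2 u_2$ is the general solution. -/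
open scoped Nat

set_option linter.unusedSectionVars false

lemma spps_zero (w1 w2 : ℝ → ℂ) (n : ℕ) (hn : n ≠ 0) : spps w1 w2 n 0 = 0 := by
  cases n with
  | zero => exact absurd rfl hn
  | succ m => simp [spps]

section

variable {w1 w2 : ℝ → ℂ} {a b : ℝ} (ha : a < 0) (hb : 0 < b)
  (hw1 : ContinuousOn w1 (Set.Ioo a b)) (hw2 : ContinuousOn w2 (Set.Ioo a b))

include ha hb hw1 hw2

lemma spps_contOn : ∀ n : ℕ, ContinuousOn (spps w1 w2 n) (Set.Ioo a b) := by
  intro n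
  induction n with
  | zero => exact continuousOn_const
  | succ m ih =>
    have hcont : ContinuousOn
        (fun t => spps w1 w2 m t * (if (m + 1) % 2 = 1 then w1 t else w2 t))
        (Set.Ioo a b) := by
      split <;> exact ih.mul (by assumption)
    have : ∀ x ∈ Set.Ioo a b, ContinuousAt
        (fun x => ∫ t in (0:ℝ)..x,
          spps w1 w2 m t * (if (m + 1) % 2 = 1 then w1 t else w2 t)) x := by
      intro x hx
      have h0 : (0:ℝ) ∈ Set.Ioo a b := ⟨ha, hb⟩
      have hsub : Set.uIcc (0:ℝ) x ⊆ Set.Ioo a b := Set.ordConnected_Ioo.uIcc_subset h0 hx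
      have hint : IntervalIntegrable
          (fun t => spps w1 w2 m t * (if (m + 1) % 2 = 1 then w1 t else w2 t))
          MeasureTheory.volume 0 x :=
        (hcont.mono hsub).intervalIntegrable
      refine (intervalIntegral.integral_hasDerivAt_right hint ?_ ?_).continuousAt
      · exact ⟨Set.Ioo a b, (isOpen_Ioo.mem_nhds hx),
          hcont.aestronglyMeasurable measurableSet_Ioo⟩
      · exact hcont.continuousAt (isOpen_Ioo.mem_nhds hx)
    rw [show spps w1 w2 (m+1) = fun x => (m + 1 : ℂ) *
      ∫ t in (0:ℝ)..x, spps w1 w2 m t * (if (m + 1) % 2 = 1 then w1 t else w2 t) from rfl]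
    exact continuousOn_const.mul (fun x hx => (this x hx).continuousWithinAt)

lemma spps_hasDerivAt_s8 (n : ℕ) {x : ℝ} (hx : x ∈ Set.Ioo a b) :
    HasDerivAt (spps w1 w2 (n + 1))
      ((n + 1 : ℂ) * (spps w1 w2 n x * (if (n + 1) % 2 = 1 then w1 x else w2 x))) x := by
  have hcont : ContinuousOn
      (fun t => spps w1 w2 n t * (if (n + 1) % 2 = 1 then w1 t else w2 t))
      (Set.Ioo a b) := by
    split <;> exact (spps_contOn ha hb hw1 hw2 n).mul (by assumption)
  have h0 : (0:ℝ) ∈ Set.Ioo a b := ⟨ha, hb⟩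
  have hsub : Set.uIcc (0:ℝ) x ⊆ Set.Ioo a b := Set.ordConnected_Ioo.uIcc_subset h0 hx
  have hint : IntervalIntegrable
      (fun t => spps w1 w2 n t * (if (n + 1) % 2 = 1 then w1 t else w2 t))
      MeasureTheory.volume 0 x := (hcont.mono hsub).intervalIntegrable
  have hd := intervalIntegral.integral_hasDerivAt_right hint
    ⟨Set.Ioo a b, (isOpen_Ioo.mem_nhds hx), hcont.aestronglyMeasurable measurableSet_Ioo⟩
    (hcont.continuousAt (isOpen_Ioo.mem_nhds hx))
  exact (hd.const_mul ((n:ℂ) + 1)).congr_deriv (by push_cast; ring)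

end


section

variable {w1 w2 : ℝ → ℂ} {a b : ℝ} (ha : a < 0) (hb : 0 < b)
  {B : ℝ} (hB0 : 0 ≤ B)
  (hB1 : ∀ x ∈ Set.Ioo a b, ‖w1 x‖ ≤ B) (hB2 : ∀ x ∈ Set.Ioo a b, ‖w2 x‖ ≤ B)
  (hw1 : ContinuousOn w1 (Set.Ioo a b)) (hw2 : ContinuousOn w2 (Set.Ioo a b))

include ha hb hB0 hB1 hB2 hw1 hw2

lemma spps_norm_le_s8 : ∀ n : ℕ, ∀ x ∈ Set.Ioo a b, ‖spps w1 w2 n x‖ ≤ (B * |x|) ^ n := by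
  intro n
  induction n with
  | zero => intro x _; simp [spps]
  | succ m ih =>
    intro x hx
    have h0 : (0:ℝ) ∈ Set.Ioo a b := ⟨ha, hb⟩
    have hsub : Set.uIcc (0:ℝ) x ⊆ Set.Ioo a b := Set.ordConnected_Ioo.uIcc_subset h0 hx
    have key : ‖∫ t in (0:ℝ)..x,
        spps w1 w2 m t * (if (m + 1) % 2 = 1 then w1 t else w2 t)‖ ≤
        |∫ t in (0:ℝ)..x, B ^ (m + 1) * |t| ^ m| := by
      apply intervalIntegral.norm_integral_le_abs_of_norm_le
      · apply MeasureTheory.ae_restrict_of_forall_mem measurableSet_uIoc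
        intro t ht
        have htm : t ∈ Set.Ioo a b := hsub (Set.uIoc_subset_uIcc ht)
        have h1 : ‖spps w1 w2 m t‖ ≤ (B * |t|) ^ m := ih t htm
        have h2 : ‖(if (m + 1) % 2 = 1 then w1 t else w2 t)‖ ≤ B := by
          split
          · exact hB1 t htm
          · exact hB2 t htm
        calc ‖spps w1 w2 m t * _‖ = ‖spps w1 w2 m t‖ * ‖_‖ := norm_mul _ _
          _ ≤ (B * |t|) ^ m * B := by
              apply mul_le_mul h1 h2 (norm_nonneg _) (by positivity)
          _ = B ^ (m + 1) * |t| ^ m := by rw [mul_pow]; ring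
      · exact Continuous.intervalIntegrable
          (continuous_const.mul (continuous_abs.pow m)) 0 x
    have habs : |∫ t in (0:ℝ)..x, B ^ (m + 1) * |t| ^ m| =
        B ^ (m + 1) * (|x| ^ (m + 1) / (m + 1)) := by
      rw [intervalIntegral.integral_const_mul, abs_mul,
        abs_of_nonneg (by positivity : (0:ℝ) ≤ B ^ (m+1)), abs_integral_abs_pow]
    calc ‖spps w1 w2 (m + 1) x‖
        = ‖((m:ℂ) + 1)‖ * ‖∫ t in (0:ℝ)..x,
            spps w1 w2 m t * (if (m + 1) % 2 = 1 then w1 t else w2 t)‖ := by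
          rw [show spps w1 w2 (m+1) x = ((m:ℂ)+1) * _ from rfl, norm_mul]
      _ ≤ ((m:ℝ) + 1) * (B ^ (m + 1) * (|x| ^ (m + 1) / (m + 1))) := by
          rw [habs] at key
          have hnorm : ‖((m:ℂ) + 1)‖ = (m:ℝ) + 1 := by
            rw [show ((m:ℂ) + 1) = ((m+1 : ℕ) : ℂ) by push_cast; ring]
            rw [RCLike.norm_natCast]
            push_cast; ring
          rw [hnorm]
          exact mul_le_mul_of_nonneg_left key (by positivity)
      _ = (B * |x|) ^ (m + 1) := by
          rw [mul_pow]
          field_simp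

end

lemma two_k_le_four_pow (k : ℕ) : (2 * k : ℝ) ≤ 4 ^ k := by
  calc (2 * k : ℝ) ≤ ((2 ^ (2 * k) : ℕ) : ℝ) := by
        exact_mod_cast (Nat.lt_two_pow_self (n := 2 * k)).le
    _ = 4 ^ k := by
        push_cast
        rw [pow_mul]
        norm_num

lemma summable_even_bound (r D : ℝ) (hr : 0 ≤ r) (hD : 0 ≤ D) :
    Summable (fun k : ℕ => r ^ (2 * k) / ((2 * k)! : ℝ) * (2 * k * D ^ (2 * k))) := by
  have hle : ∀ k : ℕ, r ^ (2 * k) / ((2 * k)! : ℝ) * (2 * k * D ^ (2 * k))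
      ≤ (4 * (r * D) ^ 2) ^ k / (k ! : ℝ) := by
    intro k
    
    have h1 : r ^ (2 * k) / ((2 * k)! : ℝ) * (2 * k * D ^ (2 * k))
        = (2 * k) * (r * D) ^ (2 * k) / ((2 * k)! : ℝ) := by
      rw [mul_pow]; ring
    rw [h1]
    calc (2 * k : ℝ) * (r * D) ^ (2 * k) / ((2 * k)! : ℝ)
        ≤ 4 ^ k * (r * D) ^ (2 * k) / (k ! : ℝ) := by
          apply div_le_div₀ (by positivity)
            (mul_le_mul_of_nonneg_right (two_k_le_four_pow k) (by positivity))
            (by exact_mod_cast Nat.factorial_pos k)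
            (by exact_mod_cast Nat.factorial_le (Nat.le_mul_of_pos_left k (by norm_num)))
      _ = (4 * (r * D) ^ 2) ^ k / (k ! : ℝ) := by
          rw [mul_pow (4:ℝ) ((r*D)^2) k, ← pow_mul]
  exact Summable.of_nonneg_of_le (fun k => by positivity) hle
    (Real.summable_pow_div_factorial _)

lemma summable_odd_bound (r D : ℝ) (hr : 0 ≤ r) (hD : 0 ≤ D) :
    Summable (fun k : ℕ =>
      r ^ (2 * k) / ((2 * k + 1)! : ℝ) * ((2 * k + 1) * D ^ (2 * k + 1))) := by
  have hle : ∀ k : ℕ, r ^ (2 * k) / ((2 * k + 1)! : ℝ) * ((2 * k + 1) * D ^ (2 * k + 1))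
      ≤ D * ((r * D) ^ 2) ^ k / (k ! : ℝ) := by
    intro k
    
    have hfac : ((2 * k + 1)! : ℝ) = (2 * k + 1) * ((2 * k)! : ℝ) := by
      exact_mod_cast Nat.factorial_succ (2 * k)
    have h1 : r ^ (2 * k) / ((2 * k + 1)! : ℝ) * ((2 * k + 1) * D ^ (2 * k + 1))
        = D * (r * D) ^ (2 * k) / ((2 * k)! : ℝ) := by
      rw [hfac, mul_pow, pow_succ]
      have h2 : ((2 * k : ℕ) : ℝ) + 1 ≠ 0 := by positivity
      field_simp
    rw [h1]
    calc D * (r * D) ^ (2 * k) / ((2 * k)! : ℝ)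
        ≤ D * (r * D) ^ (2 * k) / (k ! : ℝ) := by
          apply div_le_div₀ (by positivity) le_rfl
            (by exact_mod_cast Nat.factorial_pos k)
            (by exact_mod_cast Nat.factorial_le (Nat.le_mul_of_pos_left k (by norm_num)))
      _ = D * ((r * D) ^ 2) ^ k / (k ! : ℝ) := by rw [← pow_mul]
  have hs : Summable (fun k : ℕ => D * (((r * D) ^ 2) ^ k / (k ! : ℝ))) :=
    (Real.summable_pow_div_factorial _).mul_left D
  refine Summable.of_nonneg_of_le (fun k => by positivity) (fun k => ?_) hs
  rw [← mul_div_assoc]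
  exact hle k

noncomputable def gE (w1 w2 : ℝ → ℂ) (ω : ℂ) : ℕ → ℝ → ℂ
  | 0 => fun _ => 0
  | j + 1 => fun x => ω ^ (2 * j + 1 + 1) / ((2 * j + 1 + 1)! : ℂ) *
      ((((2 * j + 1 : ℕ) : ℂ) + 1) * (spps w1 w2 (2 * j + 1) x * w2 x))

noncomputable def gO (w1 w2 : ℝ → ℂ) (ω : ℂ) (k : ℕ) : ℝ → ℂ := fun x =>
  ω ^ (2 * k) / ((2 * k + 1)! : ℂ) *
      ((((2 * k : ℕ) : ℂ) + 1) * (spps w1 w2 (2 * k) x * w1 x))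

section

variable {w1 w2 : ℝ → ℂ} {a b : ℝ} (ha : a < 0) (hb : 0 < b)
  {B : ℝ} (hB0 : 0 ≤ B)
  (hB1 : ∀ x ∈ Set.Ioo a b, ‖w1 x‖ ≤ B) (hB2 : ∀ x ∈ Set.Ioo a b, ‖w2 x‖ ≤ B)
  (hw1 : ContinuousOn w1 (Set.Ioo a b)) (hw2 : ContinuousOn w2 (Set.Ioo a b))

include ha hb hB0 hB1 hB2 hw1 hw2

lemma even_series (ω : ℂ) :
    HasDerivAt (fun x => ∑' k : ℕ, ω ^ (2 * k) / ((2 * k)! : ℂ) * spps w1 w2 (2 * k) x)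
      0 0 := by
  classical
  set C := max (-a) b with hCdef
  set D := max (B * C) B with hDdef
  have hC0 : 0 ≤ C := le_max_of_le_right hb.le
  have hD0 : 0 ≤ D := le_trans hB0 (le_max_right _ _)
  have h0m : (0:ℝ) ∈ Set.Ioo a b := ⟨ha, hb⟩
  have hxC : ∀ x ∈ Set.Ioo a b, |x| ≤ C := by
    intro x hx
    rw [abs_le]
    constructor
    · have : -C ≤ a := by
        rw [neg_le]
        exact le_max_left _ _
      linarith [hx.1]
    · exact le_trans hx.2.le (le_max_right _ _)
  have hBD : ∀ y ∈ Set.Ioo a b, ∀ n : ℕ, ‖spps w1 w2 n y‖ ≤ D ^ n := by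
    intro y hy n
    refine (spps_norm_le_s8 ha hb hB0 hB1 hB2 hw1 hw2 n y hy).trans ?_
    apply pow_le_pow_left₀ (by positivity)
    exact le_trans (mul_le_mul_of_nonneg_left (hxC y hy) hB0) (le_max_left _ _)
  have hg : ∀ (k : ℕ) (y : ℝ), y ∈ Set.Ioo a b →
      HasDerivAt (fun x => ω ^ (2 * k) / ((2 * k)! : ℂ) * spps w1 w2 (2 * k) x)
        (gE w1 w2 ω k y) y := by
    intro k y hy
    cases k with
    | zero =>
      have heq : (fun x : ℝ => ω ^ (2 * 0) / ((2 * 0)! : ℂ) * spps w1 w2 (2 * 0) x)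
          = fun _ => ω ^ (2 * 0) / ((2 * 0)! : ℂ) := by
        funext x
        show _ * (1:ℂ) = _
        rw [mul_one]
      rw [heq]
      show HasDerivAt _ (0:ℂ) y
      exact hasDerivAt_const y _
    | succ j =>
      have hidx : 2 * (j + 1) = 2 * j + 1 + 1 := by ring
      rw [hidx]
      refine ((spps_hasDerivAt_s8 ha hb hw1 hw2 (2 * j + 1) hy).const_mul
        (ω ^ (2 * j + 1 + 1) / ((2 * j + 1 + 1)! : ℂ))).congr_deriv ?_
      show _ = gE w1 w2 ω (j + 1) y
      simp only [gE]
      rw [if_neg (by omega)]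
  have hg' : ∀ (k : ℕ) (y : ℝ), y ∈ Set.Ioo a b →
      ‖gE w1 w2 ω k y‖ ≤ ‖ω‖ ^ (2 * k) / ((2 * k)! : ℝ) * (2 * k * D ^ (2 * k)) := by
    intro k y hy
    cases k with
    | zero =>
      show ‖(0:ℂ)‖ ≤ _
      rw [norm_zero]
      positivity
    | succ j =>
      have hidx : 2 * (j + 1) = 2 * j + 1 + 1 := by ring
      rw [hidx]
      simp only [gE]
      rw [norm_mul, norm_mul, norm_mul, norm_div, norm_pow,
        RCLike.norm_natCast,
        show (((2 * j + 1 : ℕ) : ℂ) + 1) = ((2 * j + 1 + 1 : ℕ) : ℂ) by push_cast; ring,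
        RCLike.norm_natCast]
      have hinner : ‖spps w1 w2 (2 * j + 1) y‖ * ‖w2 y‖ ≤ D ^ (2 * j + 1 + 1) := by
        rw [pow_succ]
        exact mul_le_mul (hBD y hy _) ((hB2 y hy).trans (le_max_right _ _))
          (norm_nonneg _) (by positivity)
      have hc : ((2 * j + 1 + 1 : ℕ) : ℝ) = 2 * ((j : ℝ) + 1) := by push_cast; ring
      calc ‖ω‖ ^ (2 * j + 1 + 1) / ((2 * j + 1 + 1)! : ℝ) *
            (((2 * j + 1 + 1 : ℕ) : ℝ) * (‖spps w1 w2 (2 * j + 1) y‖ * ‖w2 y‖))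
          ≤ ‖ω‖ ^ (2 * j + 1 + 1) / ((2 * j + 1 + 1)! : ℝ) *
            (((2 * j + 1 + 1 : ℕ) : ℝ) * D ^ (2 * j + 1 + 1)) := by
            apply mul_le_mul_of_nonneg_left _ (by positivity)
            exact mul_le_mul_of_nonneg_left hinner (by positivity)
        _ = ‖ω‖ ^ (2 * j + 1 + 1) / ((2 * j + 1 + 1)! : ℝ) *
            (2 * ((j : ℝ) + 1) * D ^ (2 * j + 1 + 1)) := by rw [hc]
        _ = ‖ω‖ ^ (2 * j + 1 + 1) / ((2 * j + 1 + 1)! : ℝ) *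
            (2 * ((j + 1 : ℕ) : ℝ) * D ^ (2 * j + 1 + 1)) := by push_cast; ring
  have hg0 : Summable (fun k : ℕ => ω ^ (2 * k) / ((2 * k)! : ℂ) * spps w1 w2 (2 * k) 0) := by
    apply summable_of_ne_finset_zero (s := {0})
    intro k hk
    rw [spps_zero w1 w2 (2 * k) (by simp at hk; omega), mul_zero]
  have key := hasDerivAt_tsum_of_isPreconnected
    (summable_even_bound ‖ω‖ D (norm_nonneg _) hD0) isOpen_Ioo isPreconnected_Ioo
    hg hg' h0m hg0 h0m
  have hzero : (∑' k : ℕ, gE w1 w2 ω k 0) = 0 := by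
    have : ∀ k : ℕ, gE w1 w2 ω k 0 = 0 := by
      intro k
      cases k with
      | zero => rfl
      | succ j =>
        simp only [gE]
        rw [spps_zero w1 w2 (2 * j + 1) (by omega)]
        ring
    rw [tsum_congr this, tsum_zero]
  rwa [hzero] at key

lemma odd_series (ω : ℂ) :
    HasDerivAt (fun x => ∑' k : ℕ, ω ^ (2 * k) / ((2 * k + 1)! : ℂ) * spps w1 w2 (2 * k + 1) x)
      (w1 0) 0 := by
  classical
  set C := max (-a) b with hCdef
  set D := max (B * C) B with hDdef
  have hC0 : 0 ≤ C := le_max_of_le_right hb.le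
  have hD0 : 0 ≤ D := le_trans hB0 (le_max_right _ _)
  have h0m : (0:ℝ) ∈ Set.Ioo a b := ⟨ha, hb⟩
  have hxC : ∀ x ∈ Set.Ioo a b, |x| ≤ C := by
    intro x hx
    rw [abs_le]
    constructor
    · have : -C ≤ a := by
        rw [neg_le]
        exact le_max_left _ _
      linarith [hx.1]
    · exact le_trans hx.2.le (le_max_right _ _)
  have hBD : ∀ y ∈ Set.Ioo a b, ∀ n : ℕ, ‖spps w1 w2 n y‖ ≤ D ^ n := by
    intro y hy n
    refine (spps_norm_le_s8 ha hb hB0 hB1 hB2 hw1 hw2 n y hy).trans ?_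
    apply pow_le_pow_left₀ (by positivity)
    exact le_trans (mul_le_mul_of_nonneg_left (hxC y hy) hB0) (le_max_left _ _)
  have hg : ∀ (k : ℕ) (y : ℝ), y ∈ Set.Ioo a b →
      HasDerivAt (fun x => ω ^ (2 * k) / ((2 * k + 1)! : ℂ) * spps w1 w2 (2 * k + 1) x)
        (gO w1 w2 ω k y) y := by
    intro k y hy
    refine ((spps_hasDerivAt_s8 ha hb hw1 hw2 (2 * k) hy).const_mul
      (ω ^ (2 * k) / ((2 * k + 1)! : ℂ))).congr_deriv ?_
    show _ = gO w1 w2 ω k y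
    simp only [gO]
    rw [if_pos (by omega)]
  have hg' : ∀ (k : ℕ) (y : ℝ), y ∈ Set.Ioo a b →
      ‖gO w1 w2 ω k y‖ ≤ ‖ω‖ ^ (2 * k) / ((2 * k + 1)! : ℝ) * ((2 * k + 1) * D ^ (2 * k + 1)) := by
    intro k y hy
    simp only [gO]
    rw [norm_mul, norm_mul, norm_mul, norm_div, norm_pow,
      RCLike.norm_natCast,
      show (((2 * k : ℕ) : ℂ) + 1) = ((2 * k + 1 : ℕ) : ℂ) by push_cast; ring,
      RCLike.norm_natCast]
    have hinner : ‖spps w1 w2 (2 * k) y‖ * ‖w1 y‖ ≤ D ^ (2 * k + 1) := by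
      rw [pow_succ]
      exact mul_le_mul (hBD y hy _) ((hB1 y hy).trans (le_max_right _ _))
        (norm_nonneg _) (by positivity)
    calc ‖ω‖ ^ (2 * k) / ((2 * k + 1)! : ℝ) *
          (((2 * k + 1 : ℕ) : ℝ) * (‖spps w1 w2 (2 * k) y‖ * ‖w1 y‖))
        ≤ ‖ω‖ ^ (2 * k) / ((2 * k + 1)! : ℝ) *
          (((2 * k + 1 : ℕ) : ℝ) * D ^ (2 * k + 1)) := by
          apply mul_le_mul_of_nonneg_left _ (by positivity)
          exact mul_le_mul_of_nonneg_left hinner (by positivity)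
      _ = ‖ω‖ ^ (2 * k) / ((2 * k + 1)! : ℝ) *
          ((2 * (k : ℝ) + 1) * D ^ (2 * k + 1)) := by push_cast; ring
  have hg0 : Summable (fun k : ℕ =>
      ω ^ (2 * k) / ((2 * k + 1)! : ℂ) * spps w1 w2 (2 * k + 1) 0) := by
    apply summable_of_ne_finset_zero (s := (∅ : Finset ℕ))
    intro k _
    rw [spps_zero w1 w2 (2 * k + 1) (by omega), mul_zero]
  have key := hasDerivAt_tsum_of_isPreconnected
    (summable_odd_bound ‖ω‖ D (norm_nonneg _) hD0) isOpen_Ioo isPreconnected_Ioo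
    hg hg' h0m hg0 h0m
  have hval : (∑' k : ℕ, gO w1 w2 ω k 0) = w1 0 := by
    rw [tsum_eq_single 0]
    · show ω ^ (2 * 0) / ((2 * 0 + 1)! : ℂ) *
        ((((2 * 0 : ℕ) : ℂ) + 1) * (spps w1 w2 (2 * 0) 0 * w1 0)) = w1 0
      show ω ^ 0 / ((1)! : ℂ) * ((((0 : ℕ) : ℂ) + 1) * (1 * w1 0)) = w1 0
      norm_num
    · intro k hk
      simp only [gO]
      rw [spps_zero w1 w2 (2 * k) (by omega)]
      ring
  rwa [hval] at key

lemma odd_series_value (ω : ℂ) :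
    (∑' k : ℕ, ω ^ (2 * k) / ((2 * k + 1)! : ℂ) * spps w1 w2 (2 * k + 1) 0) = 0 := by
  have : ∀ k : ℕ, ω ^ (2 * k) / ((2 * k + 1)! : ℂ) * spps w1 w2 (2 * k + 1) 0 = 0 := by
    intro k
    rw [spps_zero w1 w2 (2 * k + 1) (by omega), mul_zero]
  rw [tsum_congr this, tsum_zero]

lemma even_series_value (ω : ℂ) :
    (∑' k : ℕ, ω ^ (2 * k) / ((2 * k)! : ℂ) * spps w1 w2 (2 * k) 0) = 1 := by
  rw [tsum_eq_single 0]
  · show ω ^ (2 * 0) / ((2 * 0)! : ℂ) * 1 = 1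
    norm_num
  · intro k hk
    rw [spps_zero w1 w2 (2 * k) (by omega), mul_zero]

end


/-- Initial values of the SPPS solutions: `u₁(0) = g₀(0)`, `u₁'(0) = g₀'(0)`,
`u₂(0) = 0`, `u₂'(0) = 1/(g₀(0) p(0))`; in particular `u₁, u₂` are linearly
independent. Here `u₂` is normalized with `ω^{n-1}/n!`. -/
theorem spps_initial_values (a b : ℝ) (ha : a < 0) (hb : 0 < b) (ω : ℂ)
    (p q g0 : ℝ → ℂ)
    (hp : ContDiffOn ℝ 1 p (Set.Ioo a b))
    (hp0 : ∀ x ∈ Set.Ioo a b, p x ≠ 0)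
    (hq : ContinuousOn q (Set.Ioo a b))
    (hg : ContDiffOn ℝ 2 g0 (Set.Ioo a b))
    (hg0 : ∀ x ∈ Set.Ioo a b, g0 x ≠ 0)
    (heq : ∀ x ∈ Set.Ioo a b,
      deriv (fun y => p y * deriv g0 y) x + q x * g0 x = 0)
    (hbd : ∃ M : ℝ, ∀ x ∈ Set.Ioo a b,
      ‖g0 x‖ ≤ M ∧ ‖(g0 x)⁻¹‖ ≤ M ∧ ‖p x‖ ≤ M ∧ ‖(p x)⁻¹‖ ≤ M)
    (u1 u2 : ℝ → ℂ)
    (hu1 : u1 = fun x => g0 x * ∑' k : ℕ,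
      ω ^ (2 * k) / ((2 * k)! : ℂ) *
        spps (fun t => g0 t ^ 2) (fun t => (p t * g0 t ^ 2)⁻¹) (2 * k) x)
    (hu2 : u2 = fun x => g0 x * ∑' k : ℕ,
      ω ^ (2 * k) / ((2 * k + 1)! : ℂ) *
        spps (fun t => (p t * g0 t ^ 2)⁻¹) (fun t => g0 t ^ 2) (2 * k + 1) x) :
    u1 0 = g0 0 ∧ deriv u1 0 = deriv g0 0 ∧
    u2 0 = 0 ∧ deriv u2 0 = (g0 0 * p 0)⁻¹ ∧
    LinearIndependent ℂ ![u1, u2] := by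
  obtain ⟨M, hM⟩ := hbd
  have h0m : (0:ℝ) ∈ Set.Ioo a b := ⟨ha, hb⟩
  have hM0 : 0 ≤ M := le_trans (norm_nonneg _) (hM 0 h0m).1
  set W1 : ℝ → ℂ := fun t => g0 t ^ 2 with hW1
  set W2 : ℝ → ℂ := fun t => (p t * g0 t ^ 2)⁻¹ with hW2
  set B := M ^ 2 + M ^ 3 with hBdef
  have hB0 : 0 ≤ B := by positivity
  have hBW1 : ∀ x ∈ Set.Ioo a b, ‖W1 x‖ ≤ B := by
    intro x hx
    calc ‖g0 x ^ 2‖ = ‖g0 x‖ ^ 2 := norm_pow _ _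
      _ ≤ M ^ 2 := pow_le_pow_left₀ (norm_nonneg _) (hM x hx).1 2
      _ ≤ B := le_add_of_nonneg_right (by positivity)
  have hBW2 : ∀ x ∈ Set.Ioo a b, ‖W2 x‖ ≤ B := by
    intro x hx
    have h1 : W2 x = (p x)⁻¹ * ((g0 x)⁻¹) ^ 2 := by
      show (p x * g0 x ^ 2)⁻¹ = _
      rw [mul_inv, inv_pow]
    rw [h1, norm_mul, norm_pow]
    calc ‖(p x)⁻¹‖ * ‖(g0 x)⁻¹‖ ^ 2
        ≤ M * M ^ 2 := mul_le_mul (hM x hx).2.2.2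
          (pow_le_pow_left₀ (norm_nonneg _) (hM x hx).2.1 2) (by positivity) hM0
      _ = M ^ 3 := by ring
      _ ≤ B := le_add_of_nonneg_left (by positivity)
  have hcg : ContinuousOn g0 (Set.Ioo a b) := hg.continuousOn
  have hcp : ContinuousOn p (Set.Ioo a b) := hp.continuousOn
  have hcW1 : ContinuousOn W1 (Set.Ioo a b) := hcg.pow 2
  have hcW2 : ContinuousOn W2 (Set.Ioo a b) :=
    (hcp.mul (hcg.pow 2)).inv₀
      (fun x hx => mul_ne_zero (hp0 x hx) (pow_ne_zero 2 (hg0 x hx)))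
  have hS1 : HasDerivAt
      (fun x => ∑' k : ℕ, ω ^ (2 * k) / ((2 * k)! : ℂ) * spps W1 W2 (2 * k) x) 0 0 :=
    even_series ha hb hB0 hBW1 hBW2 hcW1 hcW2 ω
  have hS1v : (∑' k : ℕ, ω ^ (2 * k) / ((2 * k)! : ℂ) * spps W1 W2 (2 * k) 0) = 1 :=
    even_series_value ha hb hB0 hBW1 hBW2 hcW1 hcW2 ω
  have hS2 : HasDerivAt
      (fun x => ∑' k : ℕ, ω ^ (2 * k) / ((2 * k + 1)! : ℂ) * spps W2 W1 (2 * k + 1) x)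
      (W2 0) 0 :=
    odd_series ha hb hB0 hBW2 hBW1 hcW2 hcW1 ω
  have hS2v : (∑' k : ℕ, ω ^ (2 * k) / ((2 * k + 1)! : ℂ) * spps W2 W1 (2 * k + 1) 0) = 0 :=
    odd_series_value ha hb hB0 hBW2 hBW1 hcW2 hcW1 ω
  have hg0d : HasDerivAt g0 (deriv g0 0) 0 := by
    have hdiff : DifferentiableAt ℝ g0 0 :=
      (hg.contDiffAt (isOpen_Ioo.mem_nhds h0m)).differentiableAt (by norm_num)
    exact hdiff.hasDerivAt
  have e1 : u1 0 = g0 0 := by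
    rw [hu1]
    show g0 0 * _ = g0 0
    rw [hS1v, mul_one]
  have hu1d : HasDerivAt u1 (deriv g0 0) 0 := by
    rw [hu1]
    refine (hg0d.mul hS1).congr_deriv ?_
    rw [hS1v]
    ring
  have e2 : deriv u1 0 = deriv g0 0 := hu1d.deriv
  have e3 : u2 0 = 0 := by
    rw [hu2]
    show g0 0 * _ = 0
    rw [hS2v, mul_zero]
  have hpg : g0 0 * W2 0 = (g0 0 * p 0)⁻¹ := by
    have h1 := hg0 0 h0m
    have h2 := hp0 0 h0m
    show g0 0 * (p 0 * g0 0 ^ 2)⁻¹ = _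
    field_simp
  have hu2d : HasDerivAt u2 ((g0 0 * p 0)⁻¹) 0 := by
    rw [hu2]
    refine (hg0d.mul hS2).congr_deriv ?_
    rw [hS2v, ← hpg]
    ring
  have e4 : deriv u2 0 = (g0 0 * p 0)⁻¹ := hu2d.deriv
  refine ⟨e1, e2, e3, e4, ?_⟩
  rw [LinearIndependent.pair_iff]
  intro s t hst
  have h1 := hg0 0 h0m
  have h2 := hp0 0 h0m
  have hev := congrFun hst 0
  simp only [Pi.add_apply, Pi.smul_apply, smul_eq_mul, Pi.zero_apply, e1, e3,
    mul_zero, add_zero] at hev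
  have hs : s = 0 := by
    rcases mul_eq_zero.mp hev with h | h
    · exact h
    · exact absurd h h1
  subst hs
  rw [zero_smul, zero_add] at hst
  rcases smul_eq_zero.mp hst with h | h
  · exact ⟨rfl, h⟩
  · exfalso
    rw [h] at e4
    have : deriv (0 : ℝ → ℂ) 0 = 0 := by
      simp [Pi.zero_def]
    rw [this] at e4
    exact inv_ne_zero (mul_ne_zero h1 h2) e4.symm
end
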